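/- arXiv:2002.08767 — 6 statements merged into one kernel-verified Lean document; each statement's English description precedes it below -/
import Mathlib

section
/- Let Mat₁(x) and Mat₂(x) be the 4×4 antisymmetric matrices of components of Ω₁ and Ω₂ in the standard basis of ℝ⁴ (i.e. (Mat_k)_{ij}(x) = Ω_k(x)(e_i, e_j)), and let S be the matrix of the canonical symplectic form ω₀ = da ∧ dp_a + db ∧ dp_b. Then the recursion operators R₁ = S⁻¹·Mat₁ and R₂ = S⁻¹·Mat₂ satisfy det R₁ = det R₂ = 0 at every point of U. -/
noncomputable section

open Complex

/-! Partial derivatives of complex-valued functions on phase space `(a, b, pa, pb)`. -/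

def pda (f : ℝ → ℝ → ℝ → ℝ → ℂ) (a b pa pb : ℝ) : ℂ := deriv (fun t => f t b pa pb) a
def pdb (f : ℝ → ℝ → ℝ → ℝ → ℂ) (a b pa pb : ℝ) : ℂ := deriv (fun t => f a t pa pb) b
def pdpa (f : ℝ → ℝ → ℝ → ℝ → ℂ) (a b pa pb : ℝ) : ℂ := deriv (fun t => f a b t pb) pa
def pdpb (f : ℝ → ℝ → ℝ → ℝ → ℂ) (a b pa pb : ℝ) : ℂ := deriv (fun t => f a b pa t) pb

/-- Poisson bracket of two complex-valued functions on phase space. -/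
def PB (f g : ℝ → ℝ → ℝ → ℝ → ℂ) (a b pa pb : ℝ) : ℂ :=
  pda f a b pa pb * pdpa g a b pa pb + pdb f a b pa pb * pdpb g a b pa pb
    - pdpa f a b pa pb * pda g a b pa pb - pdpb f a b pa pb * pdb g a b pa pb

/-! Partial derivatives of real-valued functions on phase space. -/

def pdaR (f : ℝ → ℝ → ℝ → ℝ → ℝ) (a b pa pb : ℝ) : ℝ := deriv (fun t => f t b pa pb) a
def pdbR (f : ℝ → ℝ → ℝ → ℝ → ℝ) (a b pa pb : ℝ) : ℝ := deriv (fun t => f a t pa pb) b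
def pdpaR (f : ℝ → ℝ → ℝ → ℝ → ℝ) (a b pa pb : ℝ) : ℝ := deriv (fun t => f a b t pb) pa
def pdpbR (f : ℝ → ℝ → ℝ → ℝ → ℝ) (a b pa pb : ℝ) : ℝ := deriv (fun t => f a b pa t) pb

/-- Poisson bracket of two real-valued functions on phase space. -/
def PBR (f g : ℝ → ℝ → ℝ → ℝ → ℝ) (a b pa pb : ℝ) : ℝ :=
  pdaR f a b pa pb * pdpaR g a b pa pb + pdbR f a b pa pb * pdpbR g a b pa pb
    - pdpaR f a b pa pb * pdaR g a b pa pb - pdpbR f a b pa pb * pdbR g a b pa pb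

/-- The angular momentum `J = a p_b - b p_a`. -/
def Jang (a b pa pb : ℝ) : ℝ := a * pb - b * pa

/-- The Kepler-related Hamiltonian `H_{K2}` (real-valued). -/
def HR (k1 k2 k3 : ℝ) (a b pa pb : ℝ) : ℝ :=
  (pa ^ 2 + pb ^ 2) / (2 * (a ^ 2 + b ^ 2)) + (k1 + k2 * a + k3 * b) / (a ^ 2 + b ^ 2)

/-- The Kepler-related Hamiltonian, viewed as a complex-valued function. -/
def HC (k1 k2 k3 : ℝ) (a b pa pb : ℝ) : ℂ := (HR k1 k2 k3 a b pa pb : ℂ)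

/-- The function `lambda = J/(a^2+b^2)^2`. -/
def lam (a b pa pb : ℝ) : ℝ := Jang a b pa pb / (a ^ 2 + b ^ 2) ^ 2

def A1 (a b pa pb : ℝ) : ℝ := (a ^ 2 - b ^ 2) / (a ^ 2 + b ^ 2)
def A2 (a b pa pb : ℝ) : ℝ := 2 * a * b / (a ^ 2 + b ^ 2)

/-- The complex function `A = A1 + i A2`. -/
def Afun (a b pa pb : ℝ) : ℂ := (A1 a b pa pb : ℂ) + Complex.I * (A2 a b pa pb : ℂ)

def B1 (k1 : ℝ) (a b pa pb : ℝ) : ℝ := (Jang a b pa pb) ^ 2 / (a ^ 2 + b ^ 2) + k1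
def B2 (k2 k3 : ℝ) (a b pa pb : ℝ) : ℝ :=
  Jang a b pa pb * (a * pa + b * pb) / (a ^ 2 + b ^ 2) + k3 * a - k2 * b

/-- The complex function `B = B1 + i B2`. -/
def Bfun (k1 k2 k3 : ℝ) (a b pa pb : ℝ) : ℂ :=
  (B1 k1 a b pa pb : ℂ) + Complex.I * (B2 k2 k3 a b pa pb : ℂ)

def Ma1 (k1 k2 k3 : ℝ) (a b pa pb : ℝ) : ℝ :=
  (Jang a b pa pb * pa - (k2 * b - k3 * a) * a) / Real.sqrt (a ^ 2 + b ^ 2)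
def Ma2 (k1 k2 k3 : ℝ) (a b pa pb : ℝ) : ℝ :=
  (-(Jang a b pa pb) * pb - 2 * k1 * a + (k2 * b - k3 * a) * b) / Real.sqrt (a ^ 2 + b ^ 2)

/-- The complex function `M_a = M_{a1} + i M_{a2}`. -/
def Mafun (k1 k2 k3 : ℝ) (a b pa pb : ℝ) : ℂ :=
  (Ma1 k1 k2 k3 a b pa pb : ℂ) + Complex.I * (Ma2 k1 k2 k3 a b pa pb : ℂ)

def Mb1 (k1 k2 k3 : ℝ) (a b pa pb : ℝ) : ℝ :=
  (Jang a b pa pb * pb - (k2 * b - k3 * a) * b) / Real.sqrt (a ^ 2 + b ^ 2)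
def Mb2 (k1 k2 k3 : ℝ) (a b pa pb : ℝ) : ℝ :=
  (Jang a b pa pb * pa - 2 * k1 * b - (k2 * b - k3 * a) * a) / Real.sqrt (a ^ 2 + b ^ 2)

/-- The complex function `M_b = M_{b1} + i M_{b2}`. -/
def Mbfun (k1 k2 k3 : ℝ) (a b pa pb : ℝ) : ℂ :=
  (Mb1 k1 k2 k3 a b pa pb : ℂ) + Complex.I * (Mb2 k1 k2 k3 a b pa pb : ℂ)

/-- Directional derivative of a complex-valued function along a (real) tangent vector `v ∈ ℝ⁴`,
with coordinates ordered `(a, b, p_a, p_b)`. -/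
def dd (f : ℝ → ℝ → ℝ → ℝ → ℂ) (a b pa pb : ℝ) (v : Fin 4 → ℝ) : ℂ :=
  pda f a b pa pb * (v 0 : ℂ) + pdb f a b pa pb * (v 1 : ℂ)
    + pdpa f a b pa pb * (v 2 : ℂ) + pdpb f a b pa pb * (v 3 : ℂ)

/-- Directional derivative of a real-valued function along a tangent vector `v ∈ ℝ⁴`. -/
def ddR (f : ℝ → ℝ → ℝ → ℝ → ℝ) (a b pa pb : ℝ) (v : Fin 4 → ℝ) : ℝ :=
  pdaR f a b pa pb * v 0 + pdbR f a b pa pb * v 1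
    + pdpaR f a b pa pb * v 2 + pdpbR f a b pa pb * v 3

/-- The 2-form `dF ∧ dG` evaluated on a pair of tangent vectors. -/
def wedgeR (f g : ℝ → ℝ → ℝ → ℝ → ℝ) (a b pa pb : ℝ) (u v : Fin 4 → ℝ) : ℝ :=
  ddR f a b pa pb u * ddR g a b pa pb v - ddR f a b pa pb v * ddR g a b pa pb u

/-- Hamiltonian vector field of a real-valued function:
`(∂f/∂p_a, ∂f/∂p_b, -∂f/∂a, -∂f/∂b)`. -/
def hamVF (f : ℝ → ℝ → ℝ → ℝ → ℝ) (a b pa pb : ℝ) : Fin 4 → ℝ :=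
  ![pdpaR f a b pa pb, pdpbR f a b pa pb, -pdaR f a b pa pb, -pdbR f a b pa pb]

/-- Hamiltonian vector field of a complex-valued function. -/
def hamVFC (f : ℝ → ℝ → ℝ → ℝ → ℂ) (a b pa pb : ℝ) : Fin 4 → ℂ :=
  ![pdpa f a b pa pb, pdpb f a b pa pb, -pda f a b pa pb, -pdb f a b pa pb]

/-- The Hamiltonian vector field `Γ` of `H_{K2}`. -/
def GammaVF (k1 k2 k3 : ℝ) (a b pa pb : ℝ) : Fin 4 → ℝ := hamVF (HR k1 k2 k3) a b pa pb

/-- The real first integral `J₃ = Re (A·B*)`. -/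
def J3fun (k1 k2 k3 : ℝ) (a b pa pb : ℝ) : ℝ :=
  (Afun a b pa pb * (starRingEnd ℂ) (Bfun k1 k2 k3 a b pa pb)).re

/-- The real first integral `J₄ = Im (A·B*)`. -/
def J4fun (k1 k2 k3 : ℝ) (a b pa pb : ℝ) : ℝ :=
  (Afun a b pa pb * (starRingEnd ℂ) (Bfun k1 k2 k3 a b pa pb)).im

/-- The explicit coordinate expression for `J₃`. -/
def J3ex (k1 k2 k3 : ℝ) (a b pa pb : ℝ) : ℝ :=
  Jang a b pa pb * (a * pb + b * pa) / (a ^ 2 + b ^ 2)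
    + 2 * ((k1 / 2) * ((a ^ 2 - b ^ 2) / (a ^ 2 + b ^ 2))
        - k2 * (a * b ^ 2 / (a ^ 2 + b ^ 2)) + k3 * (a ^ 2 * b / (a ^ 2 + b ^ 2)))

/-- The explicit coordinate expression for `J₄`. -/
def J4ex (k1 k2 k3 : ℝ) (a b pa pb : ℝ) : ℝ :=
  Jang a b pa pb * (a * pa - b * pb) / (a ^ 2 + b ^ 2)
    - 2 * (k1 * (a * b / (a ^ 2 + b ^ 2))
        + (k2 / 2) * (b * (a ^ 2 - b ^ 2) / (a ^ 2 + b ^ 2))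
        + (k3 / 2) * (a * (b ^ 2 - a ^ 2) / (a ^ 2 + b ^ 2)))

/-- The real first integral `K₃ = Re (M_a·M_b*)`. -/
def K3fun (k1 k2 k3 : ℝ) (a b pa pb : ℝ) : ℝ :=
  (Mafun k1 k2 k3 a b pa pb * (starRingEnd ℂ) (Mbfun k1 k2 k3 a b pa pb)).re

/-- The real first integral `K₄ = Im (M_a·M_b*)`. -/
def K4fun (k1 k2 k3 : ℝ) (a b pa pb : ℝ) : ℝ :=
  (Mafun k1 k2 k3 a b pa pb * (starRingEnd ℂ) (Mbfun k1 k2 k3 a b pa pb)).im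

/-- The real 2-form `Ω₁ = dA₁ ∧ dB₁ + dA₂ ∧ dB₂`. -/
def Om1 (k1 k2 k3 : ℝ) (a b pa pb : ℝ) (u v : Fin 4 → ℝ) : ℝ :=
  wedgeR A1 (B1 k1) a b pa pb u v + wedgeR A2 (B2 k2 k3) a b pa pb u v

/-- The real 2-form `Ω₂ = -dA₁ ∧ dB₂ + dA₂ ∧ dB₁`. -/
def Om2 (k1 k2 k3 : ℝ) (a b pa pb : ℝ) (u v : Fin 4 → ℝ) : ℝ :=
  -wedgeR A1 (B2 k2 k3) a b pa pb u v + wedgeR A2 (B1 k1) a b pa pb u v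

/-- The real 2-form `Ω_{M1} = dM_{a1} ∧ dM_{b1} + dM_{a2} ∧ dM_{b2}`. -/
def OmM1 (k1 k2 k3 : ℝ) (a b pa pb : ℝ) (u v : Fin 4 → ℝ) : ℝ :=
  wedgeR (Ma1 k1 k2 k3) (Mb1 k1 k2 k3) a b pa pb u v
    + wedgeR (Ma2 k1 k2 k3) (Mb2 k1 k2 k3) a b pa pb u v

/-- The real 2-form `Ω_{M2} = -dM_{a1} ∧ dM_{b2} + dM_{a2} ∧ dM_{b1}`. -/
def OmM2 (k1 k2 k3 : ℝ) (a b pa pb : ℝ) (u v : Fin 4 → ℝ) : ℝ :=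
  -wedgeR (Ma1 k1 k2 k3) (Mb2 k1 k2 k3) a b pa pb u v
    + wedgeR (Ma2 k1 k2 k3) (Mb1 k1 k2 k3) a b pa pb u v

/-- The standard basis vectors of `ℝ⁴`. -/
def ebasis (j : Fin 4) : Fin 4 → ℝ := Pi.single j 1


/-- The canonical symplectic form `ω₀ = da ∧ dp_a + db ∧ dp_b`. -/
def omega0 (a b pa pb : ℝ) (u v : Fin 4 → ℝ) : ℝ :=
  wedgeR (fun a _ _ _ => a) (fun _ _ pa _ => pa) a b pa pb u v
    + wedgeR (fun _ b _ _ => b) (fun _ _ _ pb => pb) a b pa pb u v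


section aux

variable {a b pa pb k1 k2 k3 : ℝ}

lemma dA1a (h : a^2+b^2 ≠ 0) : pdaR A1 a b pa pb = 4*a*b^2/(a^2+b^2)^2 := by
  have H : HasDerivAt (fun t : ℝ => (t^2 - b^2)/(t^2+b^2)) (4*a*b^2/(a^2+b^2)^2) a :=
    (((hasDerivAt_pow 2 a).sub_const (b^2)).div
      ((hasDerivAt_pow 2 a).add_const (b^2)) h).congr_deriv (by push_cast; field_simp; ring)
  simp only [pdaR, A1]; exact H.deriv

lemma dA1b (h : a^2+b^2 ≠ 0) : pdbR A1 a b pa pb = -(4*a^2*b)/(a^2+b^2)^2 := by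
  have H : HasDerivAt (fun t : ℝ => (a^2 - t^2)/(a^2+t^2)) (-(4*a^2*b)/(a^2+b^2)^2) b :=
    (((hasDerivAt_pow 2 b).const_sub (a^2)).div
      ((hasDerivAt_pow 2 b).const_add (a^2)) h).congr_deriv (by push_cast; field_simp; ring)
  simp only [pdbR, A1]; exact H.deriv

lemma dA1pa : pdpaR A1 a b pa pb = 0 := by simp [pdpaR, A1]
lemma dA1pb : pdpbR A1 a b pa pb = 0 := by simp [pdpbR, A1]

lemma dA2a (h : a^2+b^2 ≠ 0) : pdaR A2 a b pa pb = 2*b*(b^2-a^2)/(a^2+b^2)^2 := by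
  have H : HasDerivAt (fun t : ℝ => 2*t*b/(t^2+b^2)) (2*b*(b^2-a^2)/(a^2+b^2)^2) a :=
    ((((hasDerivAt_id' a).const_mul 2).mul_const b).div
      ((hasDerivAt_pow 2 a).add_const (b^2)) h).congr_deriv (by push_cast; field_simp; ring)
  simp only [pdaR, A2]; exact H.deriv

lemma dA2b (h : a^2+b^2 ≠ 0) : pdbR A2 a b pa pb = 2*a*(a^2-b^2)/(a^2+b^2)^2 := by
  have H : HasDerivAt (fun t : ℝ => 2*a*t/(a^2+t^2)) (2*a*(a^2-b^2)/(a^2+b^2)^2) b :=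
    (((hasDerivAt_id' b).const_mul (2*a)).div
      ((hasDerivAt_pow 2 b).const_add (a^2)) h).congr_deriv (by push_cast; field_simp; ring)
  simp only [pdbR, A2]; exact H.deriv

lemma dA2pa : pdpaR A2 a b pa pb = 0 := by simp [pdpaR, A2]
lemma dA2pb : pdpbR A2 a b pa pb = 0 := by simp [pdpbR, A2]

lemma dB1a (h : a^2+b^2 ≠ 0) : pdaR (B1 k1) a b pa pb =
    (2*pb*(a*pb-b*pa)*(a^2+b^2) - 2*a*(a*pb-b*pa)^2)/(a^2+b^2)^2 := by
  have H : HasDerivAt (fun t : ℝ => (t*pb - b*pa)^2/(t^2+b^2) + k1)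
      ((2*pb*(a*pb-b*pa)*(a^2+b^2) - 2*a*(a*pb-b*pa)^2)/(a^2+b^2)^2) a :=
    (((((hasDerivAt_id' a).mul_const pb).sub_const (b*pa)).pow 2).div
      ((hasDerivAt_pow 2 a).add_const (b^2)) h).add_const k1
      |>.congr_deriv (by simp only [Pi.pow_apply, Pi.mul_apply]; push_cast; field_simp)
  simp only [pdaR, B1, Jang]; exact H.deriv

lemma dB1b (h : a^2+b^2 ≠ 0) : pdbR (B1 k1) a b pa pb =
    (-(2*pa*(a*pb-b*pa))*(a^2+b^2) - 2*b*(a*pb-b*pa)^2)/(a^2+b^2)^2 := by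
  have H : HasDerivAt (fun t : ℝ => (a*pb - t*pa)^2/(a^2+t^2) + k1)
      ((-(2*pa*(a*pb-b*pa))*(a^2+b^2) - 2*b*(a*pb-b*pa)^2)/(a^2+b^2)^2) b :=
    (((((hasDerivAt_id' b).mul_const pa).const_sub (a*pb)).pow 2).div
      ((hasDerivAt_pow 2 b).const_add (a^2)) h).add_const k1
      |>.congr_deriv (by simp only [Pi.pow_apply, Pi.mul_apply]; push_cast; field_simp)
  simp only [pdbR, B1, Jang]; exact H.deriv

lemma dB1pa : pdpaR (B1 k1) a b pa pb = -(2*b*(a*pb-b*pa))/(a^2+b^2) := by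
  have H : HasDerivAt (fun t : ℝ => (a*pb - b*t)^2/(a^2+b^2) + k1)
      (-(2*b*(a*pb-b*pa))/(a^2+b^2)) pa :=
    ((((hasDerivAt_id' pa).const_mul b).const_sub (a*pb)).pow 2).div_const (a^2+b^2)
      |>.add_const k1 |>.congr_deriv (by push_cast; ring)
  simp only [pdpaR, B1, Jang]; exact H.deriv

lemma dB1pb : pdpbR (B1 k1) a b pa pb = 2*a*(a*pb-b*pa)/(a^2+b^2) := by
  have H : HasDerivAt (fun t : ℝ => (a*t - b*pa)^2/(a^2+b^2) + k1)
      (2*a*(a*pb-b*pa)/(a^2+b^2)) pb :=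
    ((((hasDerivAt_id' pb).const_mul a).sub_const (b*pa)).pow 2).div_const (a^2+b^2)
      |>.add_const k1 |>.congr_deriv (by push_cast; ring)
  simp only [pdpbR, B1, Jang]; exact H.deriv

lemma dB2a (h : a^2+b^2 ≠ 0) : pdaR (B2 k2 k3) a b pa pb =
    (pb*(a*pa+b*pb) + (a*pb-b*pa)*pa)/(a^2+b^2)
      - 2*a*(a*pb-b*pa)*(a*pa+b*pb)/(a^2+b^2)^2 + k3 := by
  have H : HasDerivAt (fun t : ℝ => (t*pb - b*pa)*(t*pa + b*pb)/(t^2+b^2) + k3*t - k2*b)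
      ((pb*(a*pa+b*pb) + (a*pb-b*pa)*pa)/(a^2+b^2)
        - 2*a*(a*pb-b*pa)*(a*pa+b*pb)/(a^2+b^2)^2 + k3) a :=
    (((((hasDerivAt_id' a).mul_const pb).sub_const (b*pa)).mul
        (((hasDerivAt_id' a).mul_const pa).add_const (b*pb))).div
      ((hasDerivAt_pow 2 a).add_const (b^2)) h).add ((hasDerivAt_id' a).const_mul k3)
      |>.sub_const (k2*b) |>.congr_deriv (by simp only [Pi.pow_apply, Pi.mul_apply]; push_cast; field_simp)
  simp only [pdaR, B2, Jang]; exact H.deriv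

lemma dB2b (h : a^2+b^2 ≠ 0) : pdbR (B2 k2 k3) a b pa pb =
    (-(pa*(a*pa+b*pb)) + (a*pb-b*pa)*pb)/(a^2+b^2)
      - 2*b*(a*pb-b*pa)*(a*pa+b*pb)/(a^2+b^2)^2 - k2 := by
  have H : HasDerivAt (fun t : ℝ => (a*pb - t*pa)*(a*pa + t*pb)/(a^2+t^2) + k3*a - k2*t)
      ((-(pa*(a*pa+b*pb)) + (a*pb-b*pa)*pb)/(a^2+b^2)
        - 2*b*(a*pb-b*pa)*(a*pa+b*pb)/(a^2+b^2)^2 - k2) b :=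
    ((((((hasDerivAt_id' b).mul_const pa).const_sub (a*pb)).mul
        (((hasDerivAt_id' b).mul_const pb).const_add (a*pa))).div
      ((hasDerivAt_pow 2 b).const_add (a^2)) h).add_const (k3*a)).sub
      ((hasDerivAt_id' b).const_mul k2)
      |>.congr_deriv (by simp only [Pi.pow_apply, Pi.mul_apply]; push_cast; field_simp)
  simp only [pdbR, B2, Jang]; exact H.deriv

lemma dB2pa : pdpaR (B2 k2 k3) a b pa pb =
    (a*(a*pb-b*pa) - b*(a*pa+b*pb))/(a^2+b^2) := by
  have H0 := ((((hasDerivAt_id' pa).const_mul b).const_sub (a*pb)).mul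
        (((hasDerivAt_id' pa).const_mul a).add_const (b*pb))).div_const (a^2+b^2)
      |>.add_const (k3*a) |>.sub_const (k2*b)
  have H : HasDerivAt (fun t : ℝ => (a*pb - b*t)*(a*t + b*pb)/(a^2+b^2) + k3*a - k2*b)
      ((a*(a*pb-b*pa) - b*(a*pa+b*pb))/(a^2+b^2)) pa := H0.congr_deriv (by push_cast; ring)
  simp only [pdpaR, B2, Jang]; exact H.deriv

lemma dB2pb : pdpbR (B2 k2 k3) a b pa pb =
    (b*(a*pb-b*pa) + a*(a*pa+b*pb))/(a^2+b^2) := by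
  have H0 := ((((hasDerivAt_id' pb).const_mul a).sub_const (b*pa)).mul
        (((hasDerivAt_id' pb).const_mul b).const_add (a*pa))).div_const (a^2+b^2)
      |>.add_const (k3*a) |>.sub_const (k2*b)
  have H : HasDerivAt (fun t : ℝ => (a*t - b*pa)*(a*pa + b*t)/(a^2+b^2) + k3*a - k2*b)
      ((b*(a*pb-b*pa) + a*(a*pa+b*pb))/(a^2+b^2)) pb := H0.congr_deriv (by push_cast; ring)
  simp only [pdpbR, B2, Jang]; exact H.deriv

lemma ddR_e0 (f : ℝ → ℝ → ℝ → ℝ → ℝ) : ddR f a b pa pb (ebasis 0) = pdaR f a b pa pb := by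
  simp [ddR, ebasis, Pi.single_apply]
lemma ddR_e1 (f : ℝ → ℝ → ℝ → ℝ → ℝ) : ddR f a b pa pb (ebasis 1) = pdbR f a b pa pb := by
  simp [ddR, ebasis, Pi.single_apply]
lemma ddR_e2 (f : ℝ → ℝ → ℝ → ℝ → ℝ) : ddR f a b pa pb (ebasis 2) = pdpaR f a b pa pb := by
  simp [ddR, ebasis, Pi.single_apply]
lemma ddR_e3 (f : ℝ → ℝ → ℝ → ℝ → ℝ) : ddR f a b pa pb (ebasis 3) = pdpbR f a b pa pb := by
  simp [ddR, ebasis, Pi.single_apply]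

end aux


lemma det_fin_four' (M : Matrix (Fin 4) (Fin 4) ℝ) : M.det =
    M 0 0*M 1 1*M 2 2*M 3 3 - M 0 0*M 1 1*M 2 3*M 3 2 - M 0 0*M 1 2*M 2 1*M 3 3
  + M 0 0*M 1 2*M 2 3*M 3 1 + M 0 0*M 1 3*M 2 1*M 3 2 - M 0 0*M 1 3*M 2 2*M 3 1
  - M 0 1*M 1 0*M 2 2*M 3 3 + M 0 1*M 1 0*M 2 3*M 3 2 + M 0 1*M 1 2*M 2 0*M 3 3
  - M 0 1*M 1 2*M 2 3*M 3 0 - M 0 1*M 1 3*M 2 0*M 3 2 + M 0 1*M 1 3*M 2 2*M 3 0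
  + M 0 2*M 1 0*M 2 1*M 3 3 - M 0 2*M 1 0*M 2 3*M 3 1 - M 0 2*M 1 1*M 2 0*M 3 3
  + M 0 2*M 1 1*M 2 3*M 3 0 + M 0 2*M 1 3*M 2 0*M 3 1 - M 0 2*M 1 3*M 2 1*M 3 0
  - M 0 3*M 1 0*M 2 1*M 3 2 + M 0 3*M 1 0*M 2 2*M 3 1 + M 0 3*M 1 1*M 2 0*M 3 2
  - M 0 3*M 1 1*M 2 2*M 3 0 - M 0 3*M 1 2*M 2 0*M 3 1 + M 0 3*M 1 2*M 2 1*M 3 0 := by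
  have h1 : (Fin.succ 2 : Fin 4) = 3 := rfl
  have h2 : Fin.succAbove (2 : Fin 4) (2 : Fin 3) = 3 := rfl
  have h3 : Fin.succAbove (1 : Fin 4) (2 : Fin 3) = 3 := rfl
  have h4 : (Fin.castSucc (2 : Fin 3) : Fin 4) = 2 := rfl
  have h5 : Fin.succAbove (3 : Fin 4) (2 : Fin 3) = 2 := rfl
  simp [Matrix.det_succ_row_zero, Fin.sum_univ_succ, h1, h2, h3, h4, h5]
  ring

set_option maxHeartbeats 4000000 in
/-- the recursion operators `R₁ = S⁻¹·Mat₁` and `R₂ = S⁻¹·Mat₂` have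
vanishing determinant at every point of `U`. -/
theorem stmt11 (k1 k2 k3 : ℝ) (a b pa pb : ℝ) (hU : a ^ 2 + b ^ 2 ≠ 0) :
    (fun (S Mat1 Mat2 : Matrix (Fin 4) (Fin 4) ℝ) =>
        (S⁻¹ * Mat1).det = 0 ∧ (S⁻¹ * Mat2).det = 0)
      (Matrix.of fun i j => omega0 a b pa pb (ebasis i) (ebasis j))
      (Matrix.of fun i j => Om1 k1 k2 k3 a b pa pb (ebasis i) (ebasis j))
      (Matrix.of fun i j => Om2 k1 k2 k3 a b pa pb (ebasis i) (ebasis j)) := by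
  have hM1 : (Matrix.of fun i j => Om1 k1 k2 k3 a b pa pb (ebasis i) (ebasis j)).det = 0 := by
    rw [det_fin_four']
    simp only [Matrix.of_apply, Om1, wedgeR, ddR_e0, ddR_e1, ddR_e2, ddR_e3]
    simp only [dA1a hU, dA1b hU, dA1pa, dA1pb, dA2a hU, dA2b hU, dA2pa, dA2pb,
      dB1a hU, dB1b hU, dB1pa, dB1pb, dB2a hU, dB2b hU, dB2pa, dB2pb]
    field_simp
    ring
  have hM2 : (Matrix.of fun i j => Om2 k1 k2 k3 a b pa pb (ebasis i) (ebasis j)).det = 0 := by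
    rw [det_fin_four']
    simp only [Matrix.of_apply, Om2, wedgeR, ddR_e0, ddR_e1, ddR_e2, ddR_e3]
    simp only [dA1a hU, dA1b hU, dA1pa, dA1pb, dA2a hU, dA2b hU, dA2pa, dA2pb,
      dB1a hU, dB1b hU, dB1pa, dB1pb, dB2a hU, dB2b hU, dB2pa, dB2pb]
    field_simp
    ring
  exact ⟨by rw [Matrix.det_mul, hM1, mul_zero], by rw [Matrix.det_mul, hM2, mul_zero]⟩
end
end

section
/- The complex functions M_a and M_b satisfy, at every point of U, the Poisson-bracket relations {M_a, H} = iλM_a and {M_b, H} = iλM_b. -/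
noncomputable section

open Complex

set_option maxHeartbeats 4000000 in
lemma quad' (P : ℝ → ℝ) (c2 c1 c0 t : ℝ) (h : ∀ x, P x = c2*x^2 + c1*x + c0) :
    HasDerivAt P (2*c2*t + c1) t := by
  have h1 := ((hasDerivAt_pow 2 t).const_mul c2).add (((hasDerivAt_id t).const_mul c1).add_const c0)
  have h2 : (fun x : ℝ => c2 * x ^ 2 + (c1 * id x + c0)) = P :=
    funext fun x => by rw [h x]; simp only [id]; ring
  rw [show ((fun y : ℝ => c2 * y ^ 2) + fun x => c1 * id x + c0) = P from h2] at h1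
  refine h1.congr_deriv ?_
  push_cast
  ring

lemma sqrt_comp (Q : ℝ → ℝ) (dQ t : ℝ) (hpos : 0 < Q t) (hQ : HasDerivAt Q dQ t) :
    HasDerivAt (fun x => Real.sqrt (Q x)) (dQ / (2 * Real.sqrt (Q t))) t := by
  have h := (Real.hasDerivAt_sqrt (ne_of_gt hpos)).comp t hQ
  refine h.congr_deriv ?_
  ring

lemma div_sqrt' (P Q : ℝ → ℝ) (dP dQ t : ℝ) (hpos : 0 < Q t)
    (hP : HasDerivAt P dP t) (hQ : HasDerivAt Q dQ t) :
    HasDerivAt (fun x => P x / Real.sqrt (Q x))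
      ((dP * Q t - P t * (dQ/2)) / (Real.sqrt (Q t) * Q t)) t := by
  have hq0 : Real.sqrt (Q t) ≠ 0 := by positivity
  have h := hP.div (sqrt_comp Q dQ t hpos hQ) hq0
  refine h.congr_deriv ?_
  have hq2 : Real.sqrt (Q t) ^ 2 = Q t := Real.sq_sqrt hpos.le
  set r := Real.sqrt (Q t) with hrdef
  rw [← hq2]
  field_simp

set_option maxHeartbeats 8000000 in
/-- `{M_a, H} = i λ M_a` and `{M_b, H} = i λ M_b` on `U`. -/
theorem stmt12 (k1 k2 k3 : ℝ) (a b pa pb : ℝ) (hU : a ^ 2 + b ^ 2 ≠ 0) :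
    PB (Mafun k1 k2 k3) (HC k1 k2 k3) a b pa pb =
        Complex.I * (lam a b pa pb : ℂ) * Mafun k1 k2 k3 a b pa pb ∧
      PB (Mbfun k1 k2 k3) (HC k1 k2 k3) a b pa pb =
        Complex.I * (lam a b pa pb : ℂ) * Mbfun k1 k2 k3 a b pa pb := by
  have hs : 0 < a ^ 2 + b ^ 2 := lt_of_le_of_ne (by positivity) (Ne.symm hU)
  have hq0 : Real.sqrt (a ^ 2 + b ^ 2) ≠ 0 := by positivity
  have hden2 : (2*(a^2+b^2)) ≠ 0 := by positivity
  -- partials of HR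
  have ha1 := (hasDerivAt_const a (pa^2 + pb^2)).div
      (quad' (fun x => 2*(x^2 + b^2)) 2 0 (2*b^2) a (fun x => by ring)) hden2
  have ha2 := (quad' (fun t => k1 + k2*t + k3*b) 0 k2 (k1 + k3*b) a (fun x => by ring)).div
      (quad' (fun x => x^2 + b^2) 1 0 (b^2) a (fun x => by ring)) hU
  have hHa := ha1.add ha2
  have hb1 := (hasDerivAt_const b (pa^2 + pb^2)).div
      (quad' (fun x => 2*(a^2 + x^2)) 2 0 (2*a^2) b (fun x => by ring)) hden2
  have hb2 := (quad' (fun t => k1 + k2*a + k3*t) 0 k3 (k1 + k2*a) b (fun x => by ring)).div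
      (quad' (fun x => a^2 + x^2) 1 0 (a^2) b (fun x => by ring)) hU
  have hHb := hb1.add hb2
  have hHpa := (quad' (fun t : ℝ => (t^2 + pb^2)/(2*(a^2+b^2)) + (k1 + k2*a + k3*b)/(a^2+b^2))
      (1/(2*(a^2+b^2))) 0 (pb^2/(2*(a^2+b^2)) + (k1 + k2*a + k3*b)/(a^2+b^2)) pa
      (fun x => by field_simp; ring))
  have hHpb := (quad' (fun t : ℝ => (pa^2 + t^2)/(2*(a^2+b^2)) + (k1 + k2*a + k3*b)/(a^2+b^2))
      (1/(2*(a^2+b^2))) 0 (pa^2/(2*(a^2+b^2)) + (k1 + k2*a + k3*b)/(a^2+b^2)) pb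
      (fun x => by field_simp; ring))
  have f1 : pda (HC k1 k2 k3) a b pa pb = _ := HasDerivAt.deriv hHa.ofReal_comp
  have f2 : pdb (HC k1 k2 k3) a b pa pb = _ := HasDerivAt.deriv hHb.ofReal_comp
  have f3 : pdpa (HC k1 k2 k3) a b pa pb = _ := HasDerivAt.deriv hHpa.ofReal_comp
  have f4 : pdpb (HC k1 k2 k3) a b pa pb = _ := HasDerivAt.deriv hHpb.ofReal_comp
  constructor
  · -- partials of Ma1
    have d1a := div_sqrt' (fun t => (t*pb - b*pa)*pa - (k2*b - k3*t)*t) (fun x => x^2 + b^2)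
        (2*k3*a + (pa*pb - k2*b)) (2*1*a + 0) a hs
        (quad' _ k3 (pa*pb - k2*b) (-(b*(pa*pa))) a (fun x => by ring))
        (quad' _ 1 0 (b^2) a (fun x => by ring))
    have d1b := div_sqrt' (fun t => (a*pb - t*pa)*pa - (k2*t - k3*a)*a) (fun x => a^2 + x^2)
        (2*0*b + (-(pa*pa) - k2*a)) (2*1*b + 0) b hs
        (quad' _ 0 (-(pa*pa) - k2*a) (a*pa*pb + k3*a^2) b (fun x => by ring))
        (quad' _ 1 0 (a^2) b (fun x => by ring))
    have d1pa := HasDerivAt.div_const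
        (quad' (fun t => (a*pb - b*t)*t - (k2*b - k3*a)*a) (-b) (a*pb) (-((k2*b - k3*a)*a)) pa
          (fun x => by ring)) (Real.sqrt (a^2 + b^2))
    have d1pb := HasDerivAt.div_const
        (quad' (fun t => (a*t - b*pa)*pa - (k2*b - k3*a)*a) 0 (a*pa) (-(b*(pa*pa)) - (k2*b - k3*a)*a) pb
          (fun x => by ring)) (Real.sqrt (a^2 + b^2))
    -- partials of Ma2
    have d2a := div_sqrt' (fun t => -(t*pb - b*pa)*pb - 2*k1*t + (k2*b - k3*t)*b) (fun x => x^2 + b^2)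
        (2*0*a + (-(pb*pb) - 2*k1 - k3*b)) (2*1*a + 0) a hs
        (quad' _ 0 (-(pb*pb) - 2*k1 - k3*b) (b*pa*pb + k2*b^2) a (fun x => by ring))
        (quad' _ 1 0 (b^2) a (fun x => by ring))
    have d2b := div_sqrt' (fun t => -(a*pb - t*pa)*pb - 2*k1*a + (k2*t - k3*a)*t) (fun x => a^2 + x^2)
        (2*k2*b + (pa*pb - k3*a)) (2*1*b + 0) b hs
        (quad' _ k2 (pa*pb - k3*a) (-(a*(pb*pb)) - 2*k1*a) b (fun x => by ring))
        (quad' _ 1 0 (a^2) b (fun x => by ring))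
    have d2pa := HasDerivAt.div_const
        (quad' (fun t => -(a*pb - b*t)*pb - 2*k1*a + (k2*b - k3*a)*b) 0 (b*pb)
          (-(a*(pb*pb)) - 2*k1*a + (k2*b - k3*a)*b) pa (fun x => by ring)) (Real.sqrt (a^2 + b^2))
    have d2pb := HasDerivAt.div_const
        (quad' (fun t => -(a*t - b*pa)*t - 2*k1*a + (k2*b - k3*a)*b) (-a) (b*pa)
          (-(2*k1*a) + (k2*b - k3*a)*b) pb (fun x => by ring)) (Real.sqrt (a^2 + b^2))
    have e1 : pda (Mafun k1 k2 k3) a b pa pb = _ :=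
      HasDerivAt.deriv (d1a.ofReal_comp.add (d2a.ofReal_comp.const_mul Complex.I))
    have e2 : pdb (Mafun k1 k2 k3) a b pa pb = _ :=
      HasDerivAt.deriv (d1b.ofReal_comp.add (d2b.ofReal_comp.const_mul Complex.I))
    have e3 : pdpa (Mafun k1 k2 k3) a b pa pb = _ :=
      HasDerivAt.deriv (d1pa.ofReal_comp.add (d2pa.ofReal_comp.const_mul Complex.I))
    have e4 : pdpb (Mafun k1 k2 k3) a b pa pb = _ :=
      HasDerivAt.deriv (d1pb.ofReal_comp.add (d2pb.ofReal_comp.const_mul Complex.I))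
    rw [PB, e1, e2, e3, e4, f1, f2, f3, f4]
    simp only [Mafun, Ma1, Ma2, lam, Jang]
    rw [Complex.ext_iff]
    constructor
    · simp only [Complex.add_re, Complex.add_im, Complex.sub_re, Complex.sub_im, Complex.mul_re,
        Complex.mul_im, Complex.I_re, Complex.I_im, Complex.ofReal_re, Complex.ofReal_im]
      field_simp
      ring
    · simp only [Complex.add_re, Complex.add_im, Complex.sub_re, Complex.sub_im, Complex.mul_re,
        Complex.mul_im, Complex.I_re, Complex.I_im, Complex.ofReal_re, Complex.ofReal_im]
      field_simp
      ring
  · -- partials of Mb1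
    have d1a := div_sqrt' (fun t => (t*pb - b*pa)*pb - (k2*b - k3*t)*b) (fun x => x^2 + b^2)
        (2*0*a + (pb*pb + k3*b)) (2*1*a + 0) a hs
        (quad' _ 0 (pb*pb + k3*b) (-(b*pa*pb) - k2*b^2) a (fun x => by ring))
        (quad' _ 1 0 (b^2) a (fun x => by ring))
    have d1b := div_sqrt' (fun t => (a*pb - t*pa)*pb - (k2*t - k3*a)*t) (fun x => a^2 + x^2)
        (2*(-k2)*b + (-(pa*pb) + k3*a)) (2*1*b + 0) b hs
        (quad' _ (-k2) (-(pa*pb) + k3*a) (a*(pb*pb)) b (fun x => by ring))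
        (quad' _ 1 0 (a^2) b (fun x => by ring))
    have d1pa := HasDerivAt.div_const
        (quad' (fun t => (a*pb - b*t)*pb - (k2*b - k3*a)*b) 0 (-(b*pb))
          (a*(pb*pb) - (k2*b - k3*a)*b) pa (fun x => by ring)) (Real.sqrt (a^2 + b^2))
    have d1pb := HasDerivAt.div_const
        (quad' (fun t => (a*t - b*pa)*t - (k2*b - k3*a)*b) a (-(b*pa))
          (-((k2*b - k3*a)*b)) pb (fun x => by ring)) (Real.sqrt (a^2 + b^2))
    -- partials of Mb2
    have d2a := div_sqrt' (fun t => (t*pb - b*pa)*pa - 2*k1*b - (k2*b - k3*t)*t) (fun x => x^2 + b^2)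
        (2*k3*a + (pa*pb - k2*b)) (2*1*a + 0) a hs
        (quad' _ k3 (pa*pb - k2*b) (-(b*(pa*pa)) - 2*k1*b) a (fun x => by ring))
        (quad' _ 1 0 (b^2) a (fun x => by ring))
    have d2b := div_sqrt' (fun t => (a*pb - t*pa)*pa - 2*k1*t - (k2*t - k3*a)*a) (fun x => a^2 + x^2)
        (2*0*b + (-(pa*pa) - 2*k1 - k2*a)) (2*1*b + 0) b hs
        (quad' _ 0 (-(pa*pa) - 2*k1 - k2*a) (a*pa*pb + k3*a^2) b (fun x => by ring))
        (quad' _ 1 0 (a^2) b (fun x => by ring))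
    have d2pa := HasDerivAt.div_const
        (quad' (fun t => (a*pb - b*t)*t - 2*k1*b - (k2*b - k3*a)*a) (-b) (a*pb)
          (-(2*k1*b) - (k2*b - k3*a)*a) pa (fun x => by ring)) (Real.sqrt (a^2 + b^2))
    have d2pb := HasDerivAt.div_const
        (quad' (fun t => (a*t - b*pa)*pa - 2*k1*b - (k2*b - k3*a)*a) 0 (a*pa)
          (-(b*(pa*pa)) - 2*k1*b - (k2*b - k3*a)*a) pb (fun x => by ring)) (Real.sqrt (a^2 + b^2))
    have e1 : pda (Mbfun k1 k2 k3) a b pa pb = _ :=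
      HasDerivAt.deriv (d1a.ofReal_comp.add (d2a.ofReal_comp.const_mul Complex.I))
    have e2 : pdb (Mbfun k1 k2 k3) a b pa pb = _ :=
      HasDerivAt.deriv (d1b.ofReal_comp.add (d2b.ofReal_comp.const_mul Complex.I))
    have e3 : pdpa (Mbfun k1 k2 k3) a b pa pb = _ :=
      HasDerivAt.deriv (d1pa.ofReal_comp.add (d2pa.ofReal_comp.const_mul Complex.I))
    have e4 : pdpb (Mbfun k1 k2 k3) a b pa pb = _ :=
      HasDerivAt.deriv (d1pb.ofReal_comp.add (d2pb.ofReal_comp.const_mul Complex.I))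
    rw [PB, e1, e2, e3, e4, f1, f2, f3, f4]
    simp only [Mbfun, Mb1, Mb2, lam, Jang]
    rw [Complex.ext_iff]
    constructor
    · simp only [Complex.add_re, Complex.add_im, Complex.sub_re, Complex.sub_im, Complex.mul_re,
        Complex.mul_im, Complex.I_re, Complex.I_im, Complex.ofReal_re, Complex.ofReal_im]
      field_simp
      ring
    · simp only [Complex.add_re, Complex.add_im, Complex.sub_re, Complex.sub_im, Complex.mul_re,
        Complex.mul_im, Complex.I_re, Complex.I_im, Complex.ofReal_re, Complex.ofReal_im]
      field_simp
      ring
end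
end

section
/- (Proposition 3) The complex function K₃₄ = M_a·M_b* is a constant of the motion for H: {M_a·M_b*, H} = 0 at every point of U, where M_b* denotes the complex conjugate of M_b. -/
noncomputable section

open Complex

private lemma hdOfReal (x : ℝ) : HasDerivAt (fun t : ℝ => (t : ℂ)) 1 x := by
  simpa using (hasDerivAt_id x).ofReal_comp

private lemma hdPoly (c0 c1 c2 c3 c4 : ℂ) (x : ℝ) :
    HasDerivAt (fun t : ℝ => c0 + c1*(t:ℂ) + c2*((t:ℂ)*t) + c3*((t:ℂ)*t*t) + c4*((t:ℂ)*t*t*t))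
      (c1 + 2*c2*(x:ℂ) + 3*c3*((x:ℂ)*x) + 4*c4*((x:ℂ)*x*x)) x := by
  have h := hdOfReal x
  have h2 := h.mul h
  have h3 := h2.mul h
  have h4 := h3.mul h
  have hh := ((((hasDerivAt_const x c0).add (h.const_mul c1)).add
      (h2.const_mul c2)).add (h3.const_mul c3)).add (h4.const_mul c4)
  exact hh.congr_deriv (by simp only [Pi.mul_apply]; ring)

private lemma hdRatio (c0 c1 c2 c3 c4 d : ℂ) (x : ℝ) (hd : (x:ℂ)*x + d ≠ 0) :
    HasDerivAt (fun t : ℝ =>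
        (c0 + c1*(t:ℂ) + c2*((t:ℂ)*t) + c3*((t:ℂ)*t*t) + c4*((t:ℂ)*t*t*t))/((t:ℂ)*t + d))
      (((c1 + 2*c2*(x:ℂ) + 3*c3*((x:ℂ)*x) + 4*c4*((x:ℂ)*x*x))*((x:ℂ)*x+d)
        - (c0 + c1*(x:ℂ) + c2*((x:ℂ)*x) + c3*((x:ℂ)*x*x) + c4*((x:ℂ)*x*x*x))*(2*(x:ℂ)))
        /((x:ℂ)*x+d)^2) x := by
  have h := hdOfReal x
  have hden : HasDerivAt (fun t : ℝ => (t:ℂ)*t + d) (2*(x:ℂ)) x := by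
    have h2 := (h.mul h).add_const d
    exact h2.congr_deriv (by ring)
  exact (hdPoly c0 c1 c2 c3 c4 x).div hden hd

private lemma hdPolyc (c0 c1 c2 c3 c4 e : ℂ) (x : ℝ) :
    HasDerivAt (fun t : ℝ =>
        (c0 + c1*(t:ℂ) + c2*((t:ℂ)*t) + c3*((t:ℂ)*t*t) + c4*((t:ℂ)*t*t*t))/e)
      ((c1 + 2*c2*(x:ℂ) + 3*c3*((x:ℂ)*x) + 4*c4*((x:ℂ)*x*x))/e) x :=
  (hdPoly c0 c1 c2 c3 c4 x).div_const e

private def Kfun (k1 k2 k3 a b pa pb : ℝ) : ℂ :=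
  ((((-2:ℝ)*b^2*pa*pb*k1 + (-2:ℝ)*b^3*k1*k2 + (4:ℝ)*a*b*k1^2 + (2:ℝ)*a*b*pb^2*k1 + (2:ℝ)*a*b*pa^2*k1 + (2:ℝ)*a*b^2*k1*k3 + (-2:ℝ)*a^2*pa*pb*k1 + (2:ℝ)*a^2*b*k1*k2 + (-2:ℝ)*a^3*k1*k3) : ℝ) : ℂ) / ((a^2+b^2 : ℝ) : ℂ)
    + Complex.I * (((((-2:ℝ)*b^2*pa^2*k1 + (-1:ℝ)*b^2*pa^2*pb^2 + (-1:ℝ)*b^2*pa^4 + (-2:ℝ)*b^3*pa*pb*k2 + (-1:ℝ)*b^4*k2^2 + (4:ℝ)*a*b*pa*pb*k1 + (2:ℝ)*a*b*pa*pb^3 + (2:ℝ)*a*b*pa^3*pb + (2:ℝ)*a*b^2*pb^2*k2 + (2:ℝ)*a*b^2*pa*pb*k3 + (-2:ℝ)*a*b^2*pa^2*k2 + (2:ℝ)*a*b^3*k2*k3 + (-2:ℝ)*a^2*pb^2*k1 + (-1:ℝ)*a^2*pb^4 + (-1:ℝ)*a^2*pa^2*pb^2 + (-2:ℝ)*a^2*b*pb^2*k3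 + (2:ℝ)*a^2*b*pa*pb*k2 + (2:ℝ)*a^2*b*pa^2*k3 + (-1:ℝ)*a^2*b^2*k3^2 + (-1:ℝ)*a^2*b^2*k2^2 + (-2:ℝ)*a^3*pa*pb*k3 + (2:ℝ)*a^3*b*k2*k3 + (-1:ℝ)*a^4*k3^2) : ℝ) : ℂ) / ((a^2+b^2 : ℝ) : ℂ))

set_option maxHeartbeats 1000000 in
private lemma Keq (k1 k2 k3 a b pa pb : ℝ) (h : a^2+b^2 ≠ 0) :
    Mafun k1 k2 k3 a b pa pb * (starRingEnd ℂ) (Mbfun k1 k2 k3 a b pa pb)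
      = Kfun k1 k2 k3 a b pa pb := by
  have h0 : (0:ℝ) ≤ a^2+b^2 := by positivity
  unfold Mafun Mbfun Kfun Ma1 Ma2 Mb1 Mb2 Jang
  set r := Real.sqrt (a^2+b^2) with hrdef
  have hr : r^2 = a^2+b^2 := Real.sq_sqrt h0
  have hr0 : r ≠ 0 := by
    intro h1
    rw [h1] at hr
    exact h (by linarith [hr])
  rw [← hr]
  simp only [map_add, map_mul, Complex.conj_ofReal, Complex.conj_I]
  push_cast
  linear_combination (-((-(((a:ℝ):ℂ)*((pb:ℝ):ℂ)-((b:ℝ):ℂ)*((pa:ℝ):ℂ))*((pb:ℝ):ℂ)-2*((k1:ℝ):ℂ)*((a:ℝ):ℂ)+(((k2:ℝ):ℂ)*((b:ℝ):ℂ)-((k3:ℝ):ℂ)*((a:ℝ):ℂ))*((b:ℝ):ℂ))/((r:ℝ):ℂ) * (((((a:ℝ):ℂ)*((pb:ℝ):ℂ)-((b:ℝ):ℂ)*((pa:ℝ):ℂ))*((pa:ℝ):ℂ)-2*((k1:ℝ):ℂ)*((b:ℝ):ℂ)-(((k2:ℝ):ℂ)*((b:ℝ):ℂ)-((k3:ℝ):ℂ)*((a:ℝ):ℂ))*((a:ℝ):ℂ))/((r:ℝ):ℂ))))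 * Complex.I_sq

set_option maxHeartbeats 4000000 in
/-- Proposition 3: `K₃₄ = M_a·M_b*` is a constant of the motion:
`{M_a·M_b*, H} = 0`. -/
theorem stmt13 (k1 k2 k3 : ℝ) (a b pa pb : ℝ) (hU : a ^ 2 + b ^ 2 ≠ 0) :
    PB (fun a b pa pb =>
        Mafun k1 k2 k3 a b pa pb * (starRingEnd ℂ) (Mbfun k1 k2 k3 a b pa pb))
      (HC k1 k2 k3) a b pa pb = 0 := by
  have hsR : ((a^2+b^2 : ℝ) : ℂ) ≠ 0 := by
    rw [Complex.ofReal_ne_zero]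
    intro hc; exact hU (by linarith [hc])
  have hsa : (a:ℂ)*a + (b:ℂ)*b ≠ 0 := by
    intro hc; apply hsR; push_cast; linear_combination hc
  have hsb : (b:ℂ)*b + (a:ℂ)*a ≠ 0 := by
    intro hc; apply hsR; push_cast; linear_combination hc
  have hUb : b^2 + a^2 ≠ 0 := by intro hc; exact hU (by linarith [hc])
  have dKa : pda (fun a b pa pb =>
        Mafun k1 k2 k3 a b pa pb * (starRingEnd ℂ) (Mbfun k1 k2 k3 a b pa pb)) a b pa pb = ((((((((4:ℝ)*b*k1^2 + (2:ℝ)*b*pb^2*k1 + (2:ℝ)*b*pa^2*k1 + (2:ℝ)*b^2*k1*k3) : ℝ) : ℂ) + Complex.I*((((4:ℝ)*b*pa*pb*k1 + (2:ℝ)*b*pa*pb^3 + (2:ℝ)*b*pa^3*pb + (2:ℝ)*b^2*pb^2*k2 + (2:ℝ)*b^2*pa*pb*k3 + (-2:ℝ)*b^2*pa^2*k2 + (2:ℝ)*b^3*k2*k3) : ℝ) : ℂ)) + 2*(((((-2:ℝ)*pa*pb*k1 + (2:ℝ)*b*k1*k2) : ℝ) : ℂ) + Complex.I*((((-2:ℝ)*pb^2*k1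 + (-1:ℝ)*pb^4 + (-1:ℝ)*pa^2*pb^2 + (-2:ℝ)*b*pb^2*k3 + (2:ℝ)*b*pa*pb*k2 + (2:ℝ)*b*pa^2*k3 + (-1:ℝ)*b^2*k3^2 + (-1:ℝ)*b^2*k2^2) : ℝ) : ℂ))*(a:ℂ) + 3*(((((-2:ℝ)*k1*k3) : ℝ) : ℂ) + Complex.I*((((-2:ℝ)*pa*pb*k3 + (2:ℝ)*b*k2*k3) : ℝ) : ℂ))*((a:ℂ)*a) + 4*((((0:ℝ) : ℝ) : ℂ) + Complex.I*((((-1:ℝ)*k3^2) : ℝ) : ℂ))*((a:ℂ)*a*a))*((a:ℂ)*a+(b:ℂ)*b) - ((((((-2:ℝ)*b^2*pa*pb*k1 + (-2:ℝ)*b^3*k1*k2) : ℝ) : ℂ) + Complex.I*((((-2:ℝ)*b^2*pa^2*k1 + (-1:ℝ)*b^2*pa^2*pb^2 + (-1:ℝ)*b^2*pa^4 + (-2:ℝ)*b^3*pa*pb*k2 + (-1:ℝ)*b^4*k2^2) : ℝ) : ℂ)) + (((((4:ℝ)*b*k1^2 + (2:ℝ)*b*pb^2*k1 + (2:ℝ)*b*pa^2*k1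 + (2:ℝ)*b^2*k1*k3) : ℝ) : ℂ) + Complex.I*((((4:ℝ)*b*pa*pb*k1 + (2:ℝ)*b*pa*pb^3 + (2:ℝ)*b*pa^3*pb + (2:ℝ)*b^2*pb^2*k2 + (2:ℝ)*b^2*pa*pb*k3 + (-2:ℝ)*b^2*pa^2*k2 + (2:ℝ)*b^3*k2*k3) : ℝ) : ℂ))*(a:ℂ) + (((((-2:ℝ)*pa*pb*k1 + (2:ℝ)*b*k1*k2) : ℝ) : ℂ) + Complex.I*((((-2:ℝ)*pb^2*k1 + (-1:ℝ)*pb^4 + (-1:ℝ)*pa^2*pb^2 + (-2:ℝ)*b*pb^2*k3 + (2:ℝ)*b*pa*pb*k2 + (2:ℝ)*b*pa^2*k3 + (-1:ℝ)*b^2*k3^2 + (-1:ℝ)*b^2*k2^2) : ℝ) : ℂ))*((a:ℂ)*a) + (((((-2:ℝ)*k1*k3) : ℝ) : ℂ) + Complex.I*((((-2:ℝ)*pa*pb*k3 + (2:ℝ)*b*k2*k3) : ℝ) : ℂ))*((a:ℂ)*a*a) + ((((0:ℝ) : ℝ) : ℂ) + Complex.I*((((-1:ℝ)*k3^2) : ℝ)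 : ℂ))*((a:ℂ)*a*a*a))*(2*(a:ℂ)))/((a:ℂ)*a+(b:ℂ)*b)^2) := by
    have hev : (fun t => Mafun k1 k2 k3 t b pa pb * (starRingEnd ℂ) (Mbfun k1 k2 k3 t b pa pb))
        =ᶠ[nhds a] (fun t : ℝ => ((((((-2:ℝ)*b^2*pa*pb*k1 + (-2:ℝ)*b^3*k1*k2) : ℝ) : ℂ) + Complex.I*((((-2:ℝ)*b^2*pa^2*k1 + (-1:ℝ)*b^2*pa^2*pb^2 + (-1:ℝ)*b^2*pa^4 + (-2:ℝ)*b^3*pa*pb*k2 + (-1:ℝ)*b^4*k2^2) : ℝ) : ℂ)) + (((((4:ℝ)*b*k1^2 + (2:ℝ)*b*pb^2*k1 + (2:ℝ)*b*pa^2*k1 + (2:ℝ)*b^2*k1*k3) : ℝ) : ℂ) + Complex.I*((((4:ℝ)*b*pa*pb*k1 + (2:ℝ)*b*pa*pb^3 + (2:ℝ)*b*pa^3*pb + (2:ℝ)*b^2*pb^2*k2 + (2:ℝ)*b^2*pa*pb*k3 + (-2:ℝ)*b^2*pa^2*k2 + (2:ℝ)*b^3*k2*k3) : ℝ) : ℂ))*(t:ℂ)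 + (((((-2:ℝ)*pa*pb*k1 + (2:ℝ)*b*k1*k2) : ℝ) : ℂ) + Complex.I*((((-2:ℝ)*pb^2*k1 + (-1:ℝ)*pb^4 + (-1:ℝ)*pa^2*pb^2 + (-2:ℝ)*b*pb^2*k3 + (2:ℝ)*b*pa*pb*k2 + (2:ℝ)*b*pa^2*k3 + (-1:ℝ)*b^2*k3^2 + (-1:ℝ)*b^2*k2^2) : ℝ) : ℂ))*((t:ℂ)*t) + (((((-2:ℝ)*k1*k3) : ℝ) : ℂ) + Complex.I*((((-2:ℝ)*pa*pb*k3 + (2:ℝ)*b*k2*k3) : ℝ) : ℂ))*((t:ℂ)*t*t) + ((((0:ℝ) : ℝ) : ℂ) + Complex.I*((((-1:ℝ)*k3^2) : ℝ) : ℂ))*((t:ℂ)*t*t*t))/((t:ℂ)*t + (b:ℂ)*b)) := by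
      have hcont : ContinuousAt (fun t : ℝ => t^2 + b^2) a := by fun_prop
      filter_upwards [hcont.eventually_ne hU] with t ht
      rw [Keq k1 k2 k3 t b pa pb ht]
      unfold Kfun
      push_cast
      ring
    simp only [pda]
    rw [hev.deriv_eq]
    exact (hdRatio _ _ _ _ _ ((b:ℂ)*b) a hsa).deriv
  have dKb : pdb (fun a b pa pb =>
        Mafun k1 k2 k3 a b pa pb * (starRingEnd ℂ) (Mbfun k1 k2 k3 a b pa pb)) a b pa pb = ((((((((4:ℝ)*a*k1^2 + (2:ℝ)*a*pb^2*k1 + (2:ℝ)*a*pa^2*k1 + (2:ℝ)*a^2*k1*k2) : ℝ) : ℂ) + Complex.I*((((4:ℝ)*a*pa*pb*k1 + (2:ℝ)*a*pa*pb^3 + (2:ℝ)*a*pa^3*pb + (-2:ℝ)*a^2*pb^2*k3 + (2:ℝ)*a^2*pa*pb*k2 + (2:ℝ)*a^2*pa^2*k3 + (2:ℝ)*a^3*k2*k3) : ℝ) : ℂ)) + 2*(((((-2:ℝ)*pa*pb*k1 + (2:ℝ)*a*k1*k3) : ℝ) : ℂ) + Complex.I*((((-2:ℝ)*pa^2*k1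 + (-1:ℝ)*pa^2*pb^2 + (-1:ℝ)*pa^4 + (2:ℝ)*a*pb^2*k2 + (2:ℝ)*a*pa*pb*k3 + (-2:ℝ)*a*pa^2*k2 + (-1:ℝ)*a^2*k3^2 + (-1:ℝ)*a^2*k2^2) : ℝ) : ℂ))*(b:ℂ) + 3*(((((-2:ℝ)*k1*k2) : ℝ) : ℂ) + Complex.I*((((-2:ℝ)*pa*pb*k2 + (2:ℝ)*a*k2*k3) : ℝ) : ℂ))*((b:ℂ)*b) + 4*((((0:ℝ) : ℝ) : ℂ) + Complex.I*((((-1:ℝ)*k2^2) : ℝ) : ℂ))*((b:ℂ)*b*b))*((b:ℂ)*b+(a:ℂ)*a) - ((((((-2:ℝ)*a^2*pa*pb*k1 + (-2:ℝ)*a^3*k1*k3) : ℝ) : ℂ) + Complex.I*((((-2:ℝ)*a^2*pb^2*k1 + (-1:ℝ)*a^2*pb^4 + (-1:ℝ)*a^2*pa^2*pb^2 + (-2:ℝ)*a^3*pa*pb*k3 + (-1:ℝ)*a^4*k3^2) : ℝ) : ℂ)) + (((((4:ℝ)*a*k1^2 + (2:ℝ)*a*pb^2*k1 + (2:ℝ)*a*pa^2*k1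 + (2:ℝ)*a^2*k1*k2) : ℝ) : ℂ) + Complex.I*((((4:ℝ)*a*pa*pb*k1 + (2:ℝ)*a*pa*pb^3 + (2:ℝ)*a*pa^3*pb + (-2:ℝ)*a^2*pb^2*k3 + (2:ℝ)*a^2*pa*pb*k2 + (2:ℝ)*a^2*pa^2*k3 + (2:ℝ)*a^3*k2*k3) : ℝ) : ℂ))*(b:ℂ) + (((((-2:ℝ)*pa*pb*k1 + (2:ℝ)*a*k1*k3) : ℝ) : ℂ) + Complex.I*((((-2:ℝ)*pa^2*k1 + (-1:ℝ)*pa^2*pb^2 + (-1:ℝ)*pa^4 + (2:ℝ)*a*pb^2*k2 + (2:ℝ)*a*pa*pb*k3 + (-2:ℝ)*a*pa^2*k2 + (-1:ℝ)*a^2*k3^2 + (-1:ℝ)*a^2*k2^2) : ℝ) : ℂ))*((b:ℂ)*b) + (((((-2:ℝ)*k1*k2) : ℝ) : ℂ) + Complex.I*((((-2:ℝ)*pa*pb*k2 + (2:ℝ)*a*k2*k3) : ℝ) : ℂ))*((b:ℂ)*b*b) + ((((0:ℝ) : ℝ) : ℂ) + Complex.I*((((-1:ℝ)*k2^2) : ℝ)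 : ℂ))*((b:ℂ)*b*b*b))*(2*(b:ℂ)))/((b:ℂ)*b+(a:ℂ)*a)^2) := by
    have hev : (fun t => Mafun k1 k2 k3 a t pa pb * (starRingEnd ℂ) (Mbfun k1 k2 k3 a t pa pb))
        =ᶠ[nhds b] (fun t : ℝ => ((((((-2:ℝ)*a^2*pa*pb*k1 + (-2:ℝ)*a^3*k1*k3) : ℝ) : ℂ) + Complex.I*((((-2:ℝ)*a^2*pb^2*k1 + (-1:ℝ)*a^2*pb^4 + (-1:ℝ)*a^2*pa^2*pb^2 + (-2:ℝ)*a^3*pa*pb*k3 + (-1:ℝ)*a^4*k3^2) : ℝ) : ℂ)) + (((((4:ℝ)*a*k1^2 + (2:ℝ)*a*pb^2*k1 + (2:ℝ)*a*pa^2*k1 + (2:ℝ)*a^2*k1*k2) : ℝ) : ℂ) + Complex.I*((((4:ℝ)*a*pa*pb*k1 + (2:ℝ)*a*pa*pb^3 + (2:ℝ)*a*pa^3*pb + (-2:ℝ)*a^2*pb^2*k3 + (2:ℝ)*a^2*pa*pb*k2 + (2:ℝ)*a^2*pa^2*k3 + (2:ℝ)*a^3*k2*k3) : ℝ) : ℂ))*(t:ℂ)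 + (((((-2:ℝ)*pa*pb*k1 + (2:ℝ)*a*k1*k3) : ℝ) : ℂ) + Complex.I*((((-2:ℝ)*pa^2*k1 + (-1:ℝ)*pa^2*pb^2 + (-1:ℝ)*pa^4 + (2:ℝ)*a*pb^2*k2 + (2:ℝ)*a*pa*pb*k3 + (-2:ℝ)*a*pa^2*k2 + (-1:ℝ)*a^2*k3^2 + (-1:ℝ)*a^2*k2^2) : ℝ) : ℂ))*((t:ℂ)*t) + (((((-2:ℝ)*k1*k2) : ℝ) : ℂ) + Complex.I*((((-2:ℝ)*pa*pb*k2 + (2:ℝ)*a*k2*k3) : ℝ) : ℂ))*((t:ℂ)*t*t) + ((((0:ℝ) : ℝ) : ℂ) + Complex.I*((((-1:ℝ)*k2^2) : ℝ) : ℂ))*((t:ℂ)*t*t*t))/((t:ℂ)*t + (a:ℂ)*a)) := by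
      have hcont : ContinuousAt (fun t : ℝ => a^2 + t^2) b := by fun_prop
      filter_upwards [hcont.eventually_ne hU] with t ht
      rw [Keq k1 k2 k3 a t pa pb ht]
      unfold Kfun
      push_cast
      ring
    simp only [pdb]
    rw [hev.deriv_eq]
    exact (hdRatio _ _ _ _ _ ((a:ℂ)*a) b hsb).deriv
  have dKpa : pdpa (fun a b pa pb =>
        Mafun k1 k2 k3 a b pa pb * (starRingEnd ℂ) (Mbfun k1 k2 k3 a b pa pb)) a b pa pb = (((((((-2:ℝ)*b^2*pb*k1 + (-2:ℝ)*a^2*pb*k1) : ℝ) : ℂ) + Complex.I*((((-2:ℝ)*b^3*pb*k2 + (4:ℝ)*a*b*pb*k1 + (2:ℝ)*a*b*pb^3 + (2:ℝ)*a*b^2*pb*k3 + (2:ℝ)*a^2*b*pb*k2 + (-2:ℝ)*a^3*pb*k3) : ℝ) : ℂ)) + 2*(((((2:ℝ)*a*b*k1) : ℝ) : ℂ) + Complex.I*((((-2:ℝ)*b^2*k1 + (-1:ℝ)*b^2*pb^2 + (-2:ℝ)*a*b^2*k2 + (-1:ℝ)*a^2*pb^2 + (2:ℝ)*a^2*b*k3)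 : ℝ) : ℂ))*(pa:ℂ) + 3*((((0:ℝ) : ℝ) : ℂ) + Complex.I*((((2:ℝ)*a*b*pb) : ℝ) : ℂ))*((pa:ℂ)*pa) + 4*((((0:ℝ) : ℝ) : ℂ) + Complex.I*((((-1:ℝ)*b^2) : ℝ) : ℂ))*((pa:ℂ)*pa*pa))/((a:ℂ)*a + (b:ℂ)*b)) := by
    have hev : (fun t => Mafun k1 k2 k3 a b t pb * (starRingEnd ℂ) (Mbfun k1 k2 k3 a b t pb))
        = (fun t : ℝ => ((((((-2:ℝ)*b^3*k1*k2 + (4:ℝ)*a*b*k1^2 + (2:ℝ)*a*b*pb^2*k1 + (2:ℝ)*a*b^2*k1*k3 + (2:ℝ)*a^2*b*k1*k2 + (-2:ℝ)*a^3*k1*k3) : ℝ) : ℂ) + Complex.I*((((-1:ℝ)*b^4*k2^2 + (2:ℝ)*a*b^2*pb^2*k2 + (2:ℝ)*a*b^3*k2*k3 + (-2:ℝ)*a^2*pb^2*k1 + (-1:ℝ)*a^2*pb^4 + (-2:ℝ)*a^2*b*pb^2*k3 + (-1:ℝ)*a^2*b^2*k3^2 + (-1:ℝ)*a^2*b^2*k2^2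 + (2:ℝ)*a^3*b*k2*k3 + (-1:ℝ)*a^4*k3^2) : ℝ) : ℂ)) + (((((-2:ℝ)*b^2*pb*k1 + (-2:ℝ)*a^2*pb*k1) : ℝ) : ℂ) + Complex.I*((((-2:ℝ)*b^3*pb*k2 + (4:ℝ)*a*b*pb*k1 + (2:ℝ)*a*b*pb^3 + (2:ℝ)*a*b^2*pb*k3 + (2:ℝ)*a^2*b*pb*k2 + (-2:ℝ)*a^3*pb*k3) : ℝ) : ℂ))*(t:ℂ) + (((((2:ℝ)*a*b*k1) : ℝ) : ℂ) + Complex.I*((((-2:ℝ)*b^2*k1 + (-1:ℝ)*b^2*pb^2 + (-2:ℝ)*a*b^2*k2 + (-1:ℝ)*a^2*pb^2 + (2:ℝ)*a^2*b*k3) : ℝ) : ℂ))*((t:ℂ)*t) + ((((0:ℝ) : ℝ) : ℂ) + Complex.I*((((2:ℝ)*a*b*pb) : ℝ) : ℂ))*((t:ℂ)*t*t) + ((((0:ℝ) : ℝ) : ℂ) + Complex.I*((((-1:ℝ)*b^2) : ℝ) : ℂ))*((t:ℂ)*t*t*t))/((a:ℂ)*a + (b:ℂ)*b)) := by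
      funext t
      rw [Keq k1 k2 k3 a b t pb hU]
      unfold Kfun
      push_cast
      ring
    simp only [pdpa]
    rw [hev]
    exact (hdPolyc _ _ _ _ _ ((a:ℂ)*a + (b:ℂ)*b) pa).deriv
  have dKpb : pdpb (fun a b pa pb =>
        Mafun k1 k2 k3 a b pa pb * (starRingEnd ℂ) (Mbfun k1 k2 k3 a b pa pb)) a b pa pb = (((((((-2:ℝ)*b^2*pa*k1 + (-2:ℝ)*a^2*pa*k1) : ℝ) : ℂ) + Complex.I*((((-2:ℝ)*b^3*pa*k2 + (4:ℝ)*a*b*pa*k1 + (2:ℝ)*a*b*pa^3 + (2:ℝ)*a*b^2*pa*k3 + (2:ℝ)*a^2*b*pa*k2 + (-2:ℝ)*a^3*pa*k3) : ℝ) : ℂ)) + 2*(((((2:ℝ)*a*b*k1) : ℝ) : ℂ) + Complex.I*((((-1:ℝ)*b^2*pa^2 + (2:ℝ)*a*b^2*k2 + (-2:ℝ)*a^2*k1 + (-1:ℝ)*a^2*pa^2 + (-2:ℝ)*a^2*b*k3) : ℝ) : ℂ))*(pb:ℂ) + 3*((((0:ℝ) : ℝ) : ℂ) + Complex.I*((((2:ℝ)*a*b*pa)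 : ℝ) : ℂ))*((pb:ℂ)*pb) + 4*((((0:ℝ) : ℝ) : ℂ) + Complex.I*((((-1:ℝ)*a^2) : ℝ) : ℂ))*((pb:ℂ)*pb*pb))/((a:ℂ)*a + (b:ℂ)*b)) := by
    have hev : (fun t => Mafun k1 k2 k3 a b pa t * (starRingEnd ℂ) (Mbfun k1 k2 k3 a b pa t))
        = (fun t : ℝ => ((((((-2:ℝ)*b^3*k1*k2 + (4:ℝ)*a*b*k1^2 + (2:ℝ)*a*b*pa^2*k1 + (2:ℝ)*a*b^2*k1*k3 + (2:ℝ)*a^2*b*k1*k2 + (-2:ℝ)*a^3*k1*k3) : ℝ) : ℂ) + Complex.I*((((-2:ℝ)*b^2*pa^2*k1 + (-1:ℝ)*b^2*pa^4 + (-1:ℝ)*b^4*k2^2 + (-2:ℝ)*a*b^2*pa^2*k2 + (2:ℝ)*a*b^3*k2*k3 + (2:ℝ)*a^2*b*pa^2*k3 + (-1:ℝ)*a^2*b^2*k3^2 + (-1:ℝ)*a^2*b^2*k2^2 + (2:ℝ)*a^3*b*k2*k3 + (-1:ℝ)*a^4*k3^2) : ℝ) : ℂ)) + (((((-2:ℝ)*b^2*pa*k1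 + (-2:ℝ)*a^2*pa*k1) : ℝ) : ℂ) + Complex.I*((((-2:ℝ)*b^3*pa*k2 + (4:ℝ)*a*b*pa*k1 + (2:ℝ)*a*b*pa^3 + (2:ℝ)*a*b^2*pa*k3 + (2:ℝ)*a^2*b*pa*k2 + (-2:ℝ)*a^3*pa*k3) : ℝ) : ℂ))*(t:ℂ) + (((((2:ℝ)*a*b*k1) : ℝ) : ℂ) + Complex.I*((((-1:ℝ)*b^2*pa^2 + (2:ℝ)*a*b^2*k2 + (-2:ℝ)*a^2*k1 + (-1:ℝ)*a^2*pa^2 + (-2:ℝ)*a^2*b*k3) : ℝ) : ℂ))*((t:ℂ)*t) + ((((0:ℝ) : ℝ) : ℂ) + Complex.I*((((2:ℝ)*a*b*pa) : ℝ) : ℂ))*((t:ℂ)*t*t) + ((((0:ℝ) : ℝ) : ℂ) + Complex.I*((((-1:ℝ)*a^2) : ℝ) : ℂ))*((t:ℂ)*t*t*t))/((a:ℂ)*a + (b:ℂ)*b)) := by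
      funext t
      rw [Keq k1 k2 k3 a b pa t hU]
      unfold Kfun
      push_cast
      ring
    simp only [pdpb]
    rw [hev]
    exact (hdPolyc _ _ _ _ _ ((a:ℂ)*a + (b:ℂ)*b) pb).deriv
  have dHa : pda (HC k1 k2 k3) a b pa pb = ((((((k2) : ℝ) : ℂ) + 2*(((0:ℝ) : ℝ) : ℂ)*(a:ℂ) + 3*(((0:ℝ) : ℝ) : ℂ)*((a:ℂ)*a) + 4*(((0:ℝ) : ℝ) : ℂ)*((a:ℂ)*a*a))*((a:ℂ)*a+(b:ℂ)*b) - ((((k1 + (1/2:ℝ)*pb^2 + (1/2:ℝ)*pa^2 + b*k3) : ℝ) : ℂ) + (((k2) : ℝ) : ℂ)*(a:ℂ) + (((0:ℝ) : ℝ) : ℂ)*((a:ℂ)*a) + (((0:ℝ) : ℝ) : ℂ)*((a:ℂ)*a*a) + (((0:ℝ) : ℝ) : ℂ)*((a:ℂ)*a*a*a))*(2*(a:ℂ)))/((a:ℂ)*a+(b:ℂ)*b)^2) := by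
    have hev : (fun t => HC k1 k2 k3 t b pa pb) = (fun t : ℝ => ((((k1 + (1/2:ℝ)*pb^2 + (1/2:ℝ)*pa^2 + b*k3) : ℝ) : ℂ) + (((k2) : ℝ) : ℂ)*(t:ℂ) + (((0:ℝ) : ℝ) : ℂ)*((t:ℂ)*t) + (((0:ℝ) : ℝ) : ℂ)*((t:ℂ)*t*t) + (((0:ℝ) : ℝ) : ℂ)*((t:ℂ)*t*t*t))/((t:ℂ)*t + (b:ℂ)*b)) := by
      funext t
      unfold HC HR
      push_cast
      simp only [div_eq_mul_inv, mul_inv]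
      ring
    simp only [pda]
    rw [hev]
    exact (hdRatio _ _ _ _ _ ((b:ℂ)*b) a hsa).deriv
  have dHb : pdb (HC k1 k2 k3) a b pa pb = ((((((k3) : ℝ) : ℂ) + 2*(((0:ℝ) : ℝ) : ℂ)*(b:ℂ) + 3*(((0:ℝ) : ℝ) : ℂ)*((b:ℂ)*b) + 4*(((0:ℝ) : ℝ) : ℂ)*((b:ℂ)*b*b))*((b:ℂ)*b+(a:ℂ)*a) - ((((k1 + (1/2:ℝ)*pb^2 + (1/2:ℝ)*pa^2 + a*k2) : ℝ) : ℂ) + (((k3) : ℝ) : ℂ)*(b:ℂ) + (((0:ℝ) : ℝ) : ℂ)*((b:ℂ)*b) + (((0:ℝ) : ℝ) : ℂ)*((b:ℂ)*b*b) + (((0:ℝ) : ℝ) : ℂ)*((b:ℂ)*b*b*b))*(2*(b:ℂ)))/((b:ℂ)*b+(a:ℂ)*a)^2) := by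
    have hev : (fun t => HC k1 k2 k3 a t pa pb) = (fun t : ℝ => ((((k1 + (1/2:ℝ)*pb^2 + (1/2:ℝ)*pa^2 + a*k2) : ℝ) : ℂ) + (((k3) : ℝ) : ℂ)*(t:ℂ) + (((0:ℝ) : ℝ) : ℂ)*((t:ℂ)*t) + (((0:ℝ) : ℝ) : ℂ)*((t:ℂ)*t*t) + (((0:ℝ) : ℝ) : ℂ)*((t:ℂ)*t*t*t))/((t:ℂ)*t + (a:ℂ)*a)) := by
      funext t
      unfold HC HR
      push_cast
      simp only [div_eq_mul_inv, mul_inv]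
      ring
    simp only [pdb]
    rw [hev]
    exact (hdRatio _ _ _ _ _ ((a:ℂ)*a) b hsb).deriv
  have dHpa : pdpa (HC k1 k2 k3) a b pa pb = (((((0:ℝ) : ℝ) : ℂ) + 2*((((1/2:ℝ)) : ℝ) : ℂ)*(pa:ℂ) + 3*(((0:ℝ) : ℝ) : ℂ)*((pa:ℂ)*pa) + 4*(((0:ℝ) : ℝ) : ℂ)*((pa:ℂ)*pa*pa))/((a:ℂ)*a + (b:ℂ)*b)) := by
    have hev : (fun t => HC k1 k2 k3 a b t pb) = (fun t : ℝ => ((((k1 + (1/2:ℝ)*pb^2 + b*k3 + a*k2) : ℝ) : ℂ) + (((0:ℝ) : ℝ) : ℂ)*(t:ℂ) + ((((1/2:ℝ)) : ℝ) : ℂ)*((t:ℂ)*t) + (((0:ℝ) : ℝ) : ℂ)*((t:ℂ)*t*t) + (((0:ℝ) : ℝ) : ℂ)*((t:ℂ)*t*t*t))/((a:ℂ)*a + (b:ℂ)*b)) := by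
      funext t
      unfold HC HR
      push_cast
      simp only [div_eq_mul_inv, mul_inv]
      ring
    simp only [pdpa]
    rw [hev]
    exact (hdPolyc _ _ _ _ _ ((a:ℂ)*a + (b:ℂ)*b) pa).deriv
  have dHpb : pdpb (HC k1 k2 k3) a b pa pb = (((((0:ℝ) : ℝ) : ℂ) + 2*((((1/2:ℝ)) : ℝ) : ℂ)*(pb:ℂ) + 3*(((0:ℝ) : ℝ) : ℂ)*((pb:ℂ)*pb) + 4*(((0:ℝ) : ℝ) : ℂ)*((pb:ℂ)*pb*pb))/((a:ℂ)*a + (b:ℂ)*b)) := by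
    have hev : (fun t => HC k1 k2 k3 a b pa t) = (fun t : ℝ => ((((k1 + (1/2:ℝ)*pa^2 + b*k3 + a*k2) : ℝ) : ℂ) + (((0:ℝ) : ℝ) : ℂ)*(t:ℂ) + ((((1/2:ℝ)) : ℝ) : ℂ)*((t:ℂ)*t) + (((0:ℝ) : ℝ) : ℂ)*((t:ℂ)*t*t) + (((0:ℝ) : ℝ) : ℂ)*((t:ℂ)*t*t*t))/((a:ℂ)*a + (b:ℂ)*b)) := by
      funext t
      unfold HC HR
      push_cast
      simp only [div_eq_mul_inv, mul_inv]
      ring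
    simp only [pdpb]
    rw [hev]
    exact (hdPolyc _ _ _ _ _ ((a:ℂ)*a + (b:ℂ)*b) pb).deriv
  unfold PB
  rw [dKa, dKb, dKpa, dKpb, dHa, dHb, dHpa, dHpb]
  have hTS : ((b:ℂ)*b + (a:ℂ)*a) = ((a:ℂ)*a + (b:ℂ)*b) := by ring
  rw [hTS]
  rw [div_mul_div_comm, div_mul_div_comm, div_mul_div_comm, div_mul_div_comm]
  rw [show (((a:ℂ)*a + (b:ℂ)*b)^2 * ((a:ℂ)*a + (b:ℂ)*b)) = ((a:ℂ)*a + (b:ℂ)*b)^3 from by ring,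
      show (((a:ℂ)*a + (b:ℂ)*b) * ((a:ℂ)*a + (b:ℂ)*b)^2) = ((a:ℂ)*a + (b:ℂ)*b)^3 from by ring]
  rw [← add_div, div_sub_div_same, div_sub_div_same, div_eq_zero_iff]
  left
  push_cast
  ring
end
end

section
/- At every point of U the squared moduli of M_a and M_b satisfy M_a·M_a* = 2(J²H + k₁J₃ + J(k₃ p_a − k₂ p_b)) + (k₂ b − k₃ a)² + 2k₁² and M_b·M_b* = 2(J²H − k₁J₃ + J(k₃ p_a − k₂ p_b)) + (k₂ b − k₃ a)² + 2k₁², where J₃ = J·(a p_b + b p_a)/(a² + b²) + 2[ (k₁/2)(a² − b²)/(a² + b²) − k₂ a b²/(a² + b²) + k₃ a² b/(a² + b²) ]. -/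
noncomputable section

open Complex

/-- the squared moduli of `M_a` and `M_b`. -/
theorem stmt14 (k1 k2 k3 : ℝ) (a b pa pb : ℝ) (hU : a ^ 2 + b ^ 2 ≠ 0) :
    Mafun k1 k2 k3 a b pa pb * (starRingEnd ℂ) (Mafun k1 k2 k3 a b pa pb) =
        ((2 * ((Jang a b pa pb) ^ 2 * HR k1 k2 k3 a b pa pb
            + k1 * J3ex k1 k2 k3 a b pa pb
            + Jang a b pa pb * (k3 * pa - k2 * pb))
          + (k2 * b - k3 * a) ^ 2 + 2 * k1 ^ 2 : ℝ) : ℂ) ∧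
      Mbfun k1 k2 k3 a b pa pb * (starRingEnd ℂ) (Mbfun k1 k2 k3 a b pa pb) =
        ((2 * ((Jang a b pa pb) ^ 2 * HR k1 k2 k3 a b pa pb
            - k1 * J3ex k1 k2 k3 a b pa pb
            + Jang a b pa pb * (k3 * pa - k2 * pb))
          + (k2 * b - k3 * a) ^ 2 + 2 * k1 ^ 2 : ℝ) : ℂ) := by

  have hpos : (0:ℝ) < a ^ 2 + b ^ 2 := lt_of_le_of_ne (by positivity) (Ne.symm hU)
  have hs : Real.sqrt (a ^ 2 + b ^ 2) ^ 2 = a ^ 2 + b ^ 2 := Real.sq_sqrt hpos.le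
  have hs0 : Real.sqrt (a ^ 2 + b ^ 2) ≠ 0 := by positivity
  have key : ∀ x y : ℝ, ((x:ℂ) + Complex.I * y) * (starRingEnd ℂ) ((x:ℂ) + Complex.I * y)
      = ((x ^ 2 + y ^ 2 : ℝ) : ℂ) := by
    intro x y
    simp only [Complex.ext_iff, Complex.mul_re, Complex.mul_im, Complex.add_re, Complex.add_im,
      Complex.ofReal_re, Complex.ofReal_im, Complex.I_re, Complex.I_im, Complex.conj_re,
      Complex.conj_im]
    constructor <;> ring
  constructor
  · rw [Mafun, key]
    norm_cast
    rw [Ma1, Ma2, HR, J3ex, Jang]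
    rw [div_pow, div_pow, hs]
    field_simp
    ring
  · rw [Mbfun, key]
    norm_cast
    rw [Mb1, Mb2, HR, J3ex, Jang]
    rw [div_pow, div_pow, hs]
    field_simp
    ring
end
end

section
/- At every point of U one has M_a·M_a* − M_b·M_b* = 4k₁·[ J·(a p_b + b p_a)/(a² + b²) + 2( (k₁/2)(a² − b²)/(a² + b²) − k₂ a b²/(a² + b²) + k₃ a² b/(a² + b²) ) ]; that is, the difference of the squared moduli of M_a and M_b equals 4k₁ times the Laplace–Runge–Lenz component J₃ = Re(A·B*). -/
noncomputable section

open Complex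

/-- `M_a·M_a* - M_b·M_b* = 4 k₁ J₃`, with `J₃` in its explicit coordinate form. -/
theorem stmt15 (k1 k2 k3 : ℝ) (a b pa pb : ℝ) (hU : a ^ 2 + b ^ 2 ≠ 0) :
    Mafun k1 k2 k3 a b pa pb * (starRingEnd ℂ) (Mafun k1 k2 k3 a b pa pb)
      - Mbfun k1 k2 k3 a b pa pb * (starRingEnd ℂ) (Mbfun k1 k2 k3 a b pa pb) =
      ((4 * k1 * (Jang a b pa pb * (a * pb + b * pa) / (a ^ 2 + b ^ 2)
          + 2 * ((k1 / 2) * ((a ^ 2 - b ^ 2) / (a ^ 2 + b ^ 2))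
            - k2 * (a * b ^ 2 / (a ^ 2 + b ^ 2))
            + k3 * (a ^ 2 * b / (a ^ 2 + b ^ 2)))) : ℝ) : ℂ) := by
  have hpos : (0:ℝ) < a ^ 2 + b ^ 2 := lt_of_le_of_ne (by positivity) (Ne.symm hU)
  have hs : Real.sqrt (a ^ 2 + b ^ 2) ^ 2 = a ^ 2 + b ^ 2 := Real.sq_sqrt (le_of_lt hpos)
  have hsne : Real.sqrt (a ^ 2 + b ^ 2) ≠ 0 := by positivity
  apply Complex.ext <;>
  · simp only [Mafun, Mbfun, Ma1, Ma2, Mb1, Mb2, Jang, Complex.mul_re, Complex.mul_im,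
      Complex.add_re, Complex.add_im, Complex.sub_re, Complex.sub_im, Complex.ofReal_re,
      Complex.ofReal_im, Complex.I_re, Complex.I_im, Complex.conj_re, Complex.conj_im]
    field_simp
    nlinarith [hs, sq_nonneg (a*pb - b*pa), hpos]
end
end

section
/- Write M_a = M_{a1} + iM_{a2}, M_b = M_{b1} + iM_{b2}, K₃ = Re(M_a·M_b*), K₄ = Im(M_a·M_b*), and define the real 2-forms Ω_{M1} = dM_{a1} ∧ dM_{b1} + dM_{a2} ∧ dM_{b2} and Ω_{M2} = −dM_{a1} ∧ dM_{b2} + dM_{a2} ∧ dM_{b1} on U. Then for every point x ∈ U and every tangent vector v ∈ ℝ⁴: Ω_{M1}(x)(Γ(x), v) = −λ(x)·dK₄(x)[v] and Ω_{M2}(x)(Γ(x), v) = λ(x)·dK₃(x)[v]; i.e. Γ is quasi-bi-Hamiltonian with respect to the pairs (ω₀, Ω_{M1}) and (ω₀, Ω_{M2}). -/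
noncomputable section

open Complex

lemma hasDerivAt_poly4 (c0 c1 c2 c3 c4 t : ℝ) :
    HasDerivAt (fun x : ℝ => c0 + c1*x + c2*x^2 + c3*x^3 + c4*x^4)
      (c1 + 2*c2*t + 3*c3*t^2 + 4*c4*t^3) t := by
  have h0 := hasDerivAt_const t c0
  have h1 := (hasDerivAt_id t).const_mul c1
  have h2 := (hasDerivAt_pow 2 t).const_mul c2
  have h3 := (hasDerivAt_pow 3 t).const_mul c3
  have h4 := (hasDerivAt_pow 4 t).const_mul c4
  have := (((h0.add h1).add h2).add h3).add h4
  exact this.congr_deriv (by norm_num; ring)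

lemma hasDerivAt_poly2 (c0 c1 c2 t : ℝ) :
    HasDerivAt (fun x : ℝ => c0 + c1*x + c2*x^2) (c1 + 2*c2*t) t := by
  have := hasDerivAt_poly4 c0 c1 c2 0 0 t
  simp only [zero_mul, mul_zero, add_zero, zero_add] at this
  convert this using 2 <;> ring

lemma deriv_poly2_div_sqrt (c0 c1 c2 c t : ℝ) (h : 0 < t^2 + c) :
    deriv (fun x : ℝ => (c0 + c1*x + c2*x^2) / Real.sqrt (x^2 + c)) t
      = ((c1 + 2*c2*t) * (t^2 + c) - (c0 + c1*t + c2*t^2) * t)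
          / ((t^2 + c) * Real.sqrt (t^2 + c)) := by
  have hs : Real.sqrt (t^2 + c) ≠ 0 := by positivity
  have h1 : HasDerivAt (fun x : ℝ => x^2 + c) (2*t) t := by
    simpa using (hasDerivAt_pow 2 t).add_const c
  have hsq : HasDerivAt (fun x : ℝ => Real.sqrt (x^2 + c)) (t / Real.sqrt (t^2 + c)) t := by
    have := (Real.hasDerivAt_sqrt (ne_of_gt h)).comp t h1
    exact this.congr_deriv (by field_simp)
  set s := Real.sqrt (t^2 + c) with hsdef
  have h2 : s^2 = t^2 + c := Real.sq_sqrt h.le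
  rw [HasDerivAt.deriv (f := fun x : ℝ => (c0 + c1*x + c2*x^2) / Real.sqrt (x^2 + c)) ((hasDerivAt_poly2 c0 c1 c2 t).div hsq hs), ← hsdef, ← h2]
  field_simp

lemma deriv_poly2_div_const (c0 c1 c2 d t : ℝ) :
    deriv (fun x : ℝ => (c0 + c1*x + c2*x^2) / d) t = (c1 + 2*c2*t) / d := by
  simpa [div_eq_mul_inv] using ((hasDerivAt_poly2 c0 c1 c2 t).mul_const d⁻¹).deriv

lemma deriv_poly4_div_quad (c0 c1 c2 c3 c4 c t : ℝ) (h : t^2 + c ≠ 0) :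
    deriv (fun x : ℝ => (c0 + c1*x + c2*x^2 + c3*x^3 + c4*x^4) / (x^2 + c)) t
      = ((c1 + 2*c2*t + 3*c3*t^2 + 4*c4*t^3) * (t^2 + c)
          - (c0 + c1*t + c2*t^2 + c3*t^3 + c4*t^4) * (2*t)) / (t^2 + c)^2 := by
  have h1 : HasDerivAt (fun x : ℝ => x^2 + c) (2*t) t := by
    simpa using (hasDerivAt_pow 2 t).add_const c
  exact ((hasDerivAt_poly4 c0 c1 c2 c3 c4 t).div h1 h).deriv

lemma deriv_poly2_div_2quad (c0 c1 c2 c t : ℝ) (h : t^2 + c ≠ 0) :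
    deriv (fun x : ℝ => (c0 + c1*x + c2*x^2) / (2*(x^2 + c))) t
      = ((c1 + 2*c2*t) * (2*(t^2 + c)) - (c0 + c1*t + c2*t^2) * (2*(2*t))) / (2*(t^2 + c))^2 := by
  have h1 : HasDerivAt (fun x : ℝ => 2*(x^2 + c)) (2*(2*t)) t := by
    simpa using ((hasDerivAt_pow 2 t).add_const c).const_mul 2
  have h2 : (2:ℝ)*(t^2+c) ≠ 0 := mul_ne_zero two_ne_zero h
  exact ((hasDerivAt_poly2 c0 c1 c2 t).div h1 h2).deriv

lemma deriv_poly4_div_const (c0 c1 c2 c3 c4 d t : ℝ) :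
    deriv (fun x : ℝ => (c0 + c1*x + c2*x^2 + c3*x^3 + c4*x^4) / d) t
      = (c1 + 2*c2*t + 3*c3*t^2 + 4*c4*t^3) / d := by
  simpa [div_eq_mul_inv] using ((hasDerivAt_poly4 c0 c1 c2 c3 c4 t).mul_const d⁻¹).deriv

lemma div_common (x rr s : ℝ) (hr : rr ≠ 0) : x / s = rr * x / (rr * s) :=
  (mul_div_mul_left x s hr).symm

lemma key_re (x1 x2 y1 y2 : ℝ) :
    (((x1:ℂ) + Complex.I * x2) * (starRingEnd ℂ) ((y1:ℂ) + Complex.I * y2)).re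
      = x1*y1 + x2*y2 := by
  simp [Complex.mul_re]

lemma key_im (x1 x2 y1 y2 : ℝ) :
    (((x1:ℂ) + Complex.I * x2) * (starRingEnd ℂ) ((y1:ℂ) + Complex.I * y2)).im
      = x2*y1 - x1*y2 := by
  simp [Complex.mul_im]
  ring

set_option maxHeartbeats 3200000
set_option maxRecDepth 16000

lemma pdMa1a (k1 k2 k3 a b pa pb : ℝ) (hU : a^2+b^2 ≠ 0) :
    pdaR (Ma1 k1 k2 k3) a b pa pb = (b^2*pa*pb - b^3*k2 + a*b*pa^2 + 2*a*b^2*k3 + a^3*k3) / ((a^2+b^2) * Real.sqrt (a^2+b^2)) := by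
  have hpos : 0 < a^2 + b^2 := lt_of_le_of_ne (by positivity) (Ne.symm hU)
  have hfun : (fun t => Ma1 k1 k2 k3 t b pa pb)
      = fun x => ((-b*pa^2) + (pa*pb - b*k2)*x + (k3)*x^2) / Real.sqrt (x^2 + b^2) := by
    funext x
    simp only [Ma1, Jang]
    ring
  rw [pdaR, hfun, deriv_poly2_div_sqrt _ _ _ _ _ hpos]
  ring

lemma pdMa1b (k1 k2 k3 a b pa pb : ℝ) (hU : a^2+b^2 ≠ 0) :
    pdbR (Ma1 k1 k2 k3) a b pa pb = (-a*b*pa*pb - a^2*pa^2 - a^2*b*k3 - a^3*k2) / ((a^2+b^2) * Real.sqrt (a^2+b^2)) := by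
  have hpos : 0 < a^2 + b^2 := lt_of_le_of_ne (by positivity) (Ne.symm hU)
  have hpos' : 0 < b^2 + a^2 := by linarith
  have hfun : (fun t => Ma1 k1 k2 k3 a t pa pb)
      = fun x => ((a*pa*pb + a^2*k3) + (-pa^2 - a*k2)*x + (0:ℝ)*x^2) / Real.sqrt (x^2 + a^2) := by
    funext x
    simp only [Ma1, Jang]
    rw [add_comm (a^2) (x^2)]
    ring
  rw [pdbR, hfun, deriv_poly2_div_sqrt _ _ _ _ _ hpos', add_comm (b^2) (a^2)]
  ring

lemma pdMa1pa (k1 k2 k3 a b pa pb : ℝ) (hU : a^2+b^2 ≠ 0) :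
    pdpaR (Ma1 k1 k2 k3) a b pa pb = (-2*b^3*pa + a*b^2*pb - 2*a^2*b*pa + a^3*pb) / ((a^2+b^2) * Real.sqrt (a^2+b^2)) := by
  have hpos : 0 < a^2 + b^2 := lt_of_le_of_ne (by positivity) (Ne.symm hU)
  have hfun : (fun t => Ma1 k1 k2 k3 a b t pb)
      = fun x => ((-a*b*k2 + a^2*k3) + (a*pb)*x + (-b)*x^2) / Real.sqrt (a^2 + b^2) := by
    funext x
    simp only [Ma1, Jang]
    ring
  rw [pdpaR, hfun, deriv_poly2_div_const, div_common _ (a^2+b^2) _ hU]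
  ring

lemma pdMa1pb (k1 k2 k3 a b pa pb : ℝ) (hU : a^2+b^2 ≠ 0) :
    pdpbR (Ma1 k1 k2 k3) a b pa pb = (a*b^2*pa + a^3*pa) / ((a^2+b^2) * Real.sqrt (a^2+b^2)) := by
  have hpos : 0 < a^2 + b^2 := lt_of_le_of_ne (by positivity) (Ne.symm hU)
  have hfun : (fun t => Ma1 k1 k2 k3 a b pa t)
      = fun x => ((-b*pa^2 - a*b*k2 + a^2*k3) + (a*pa)*x + (0:ℝ)*x^2) / Real.sqrt (a^2 + b^2) := by
    funext x
    simp only [Ma1, Jang]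
    ring
  rw [pdpbR, hfun, deriv_poly2_div_const, div_common _ (a^2+b^2) _ hU]
  ring

lemma pdMa2a (k1 k2 k3 a b pa pb : ℝ) (hU : a^2+b^2 ≠ 0) :
    pdaR (Ma2 k1 k2 k3) a b pa pb = (-2*b^2*k1 - b^2*pb^2 - b^3*k3 - a*b*pa*pb - a*b^2*k2) / ((a^2+b^2) * Real.sqrt (a^2+b^2)) := by
  have hpos : 0 < a^2 + b^2 := lt_of_le_of_ne (by positivity) (Ne.symm hU)
  have hfun : (fun t => Ma2 k1 k2 k3 t b pa pb)
      = fun x => ((b*pa*pb + b^2*k2) + (-2*k1 - pb^2 - b*k3)*x + (0:ℝ)*x^2) / Real.sqrt (x^2 + b^2) := by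
    funext x
    simp only [Ma2, Jang]
    ring
  rw [pdaR, hfun, deriv_poly2_div_sqrt _ _ _ _ _ hpos]
  ring

lemma pdMa2b (k1 k2 k3 a b pa pb : ℝ) (hU : a^2+b^2 ≠ 0) :
    pdbR (Ma2 k1 k2 k3) a b pa pb = (b^3*k2 + 2*a*b*k1 + a*b*pb^2 + a^2*pa*pb + 2*a^2*b*k2 - a^3*k3) / ((a^2+b^2) * Real.sqrt (a^2+b^2)) := by
  have hpos : 0 < a^2 + b^2 := lt_of_le_of_ne (by positivity) (Ne.symm hU)
  have hpos' : 0 < b^2 + a^2 := by linarith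
  have hfun : (fun t => Ma2 k1 k2 k3 a t pa pb)
      = fun x => ((-2*a*k1 - a*pb^2) + (pa*pb - a*k3)*x + (k2)*x^2) / Real.sqrt (x^2 + a^2) := by
    funext x
    simp only [Ma2, Jang]
    rw [add_comm (a^2) (x^2)]
    ring
  rw [pdbR, hfun, deriv_poly2_div_sqrt _ _ _ _ _ hpos', add_comm (b^2) (a^2)]
  ring

lemma pdMa2pa (k1 k2 k3 a b pa pb : ℝ) (hU : a^2+b^2 ≠ 0) :
    pdpaR (Ma2 k1 k2 k3) a b pa pb = (b^3*pb + a^2*b*pb) / ((a^2+b^2) * Real.sqrt (a^2+b^2)) := by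
  have hpos : 0 < a^2 + b^2 := lt_of_le_of_ne (by positivity) (Ne.symm hU)
  have hfun : (fun t => Ma2 k1 k2 k3 a b t pb)
      = fun x => ((b^2*k2 - 2*a*k1 - a*pb^2 - a*b*k3) + (b*pb)*x + (0:ℝ)*x^2) / Real.sqrt (a^2 + b^2) := by
    funext x
    simp only [Ma2, Jang]
    ring
  rw [pdpaR, hfun, deriv_poly2_div_const, div_common _ (a^2+b^2) _ hU]
  ring

lemma pdMa2pb (k1 k2 k3 a b pa pb : ℝ) (hU : a^2+b^2 ≠ 0) :
    pdpbR (Ma2 k1 k2 k3) a b pa pb = (b^3*pa - 2*a*b^2*pb + a^2*b*pa - 2*a^3*pb) / ((a^2+b^2) * Real.sqrt (a^2+b^2)) := by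
  have hpos : 0 < a^2 + b^2 := lt_of_le_of_ne (by positivity) (Ne.symm hU)
  have hfun : (fun t => Ma2 k1 k2 k3 a b pa t)
      = fun x => ((b^2*k2 - 2*a*k1 - a*b*k3) + (b*pa)*x + (-a)*x^2) / Real.sqrt (a^2 + b^2) := by
    funext x
    simp only [Ma2, Jang]
    ring
  rw [pdpbR, hfun, deriv_poly2_div_const, div_common _ (a^2+b^2) _ hU]
  ring

lemma pdMb1a (k1 k2 k3 a b pa pb : ℝ) (hU : a^2+b^2 ≠ 0) :
    pdaR (Mb1 k1 k2 k3) a b pa pb = (b^2*pb^2 + b^3*k3 + a*b*pa*pb + a*b^2*k2) / ((a^2+b^2) * Real.sqrt (a^2+b^2)) := by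
  have hpos : 0 < a^2 + b^2 := lt_of_le_of_ne (by positivity) (Ne.symm hU)
  have hfun : (fun t => Mb1 k1 k2 k3 t b pa pb)
      = fun x => ((-b*pa*pb - b^2*k2) + (pb^2 + b*k3)*x + (0:ℝ)*x^2) / Real.sqrt (x^2 + b^2) := by
    funext x
    simp only [Mb1, Jang]
    ring
  rw [pdaR, hfun, deriv_poly2_div_sqrt _ _ _ _ _ hpos]
  ring

lemma pdMb1b (k1 k2 k3 a b pa pb : ℝ) (hU : a^2+b^2 ≠ 0) :
    pdbR (Mb1 k1 k2 k3) a b pa pb = (-b^3*k2 - a*b*pb^2 - a^2*pa*pb - 2*a^2*b*k2 + a^3*k3) / ((a^2+b^2) * Real.sqrt (a^2+b^2)) := by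
  have hpos : 0 < a^2 + b^2 := lt_of_le_of_ne (by positivity) (Ne.symm hU)
  have hpos' : 0 < b^2 + a^2 := by linarith
  have hfun : (fun t => Mb1 k1 k2 k3 a t pa pb)
      = fun x => ((a*pb^2) + (-pa*pb + a*k3)*x + (-k2)*x^2) / Real.sqrt (x^2 + a^2) := by
    funext x
    simp only [Mb1, Jang]
    rw [add_comm (a^2) (x^2)]
    ring
  rw [pdbR, hfun, deriv_poly2_div_sqrt _ _ _ _ _ hpos', add_comm (b^2) (a^2)]
  ring

lemma pdMb1pa (k1 k2 k3 a b pa pb : ℝ) (hU : a^2+b^2 ≠ 0) :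
    pdpaR (Mb1 k1 k2 k3) a b pa pb = (-b^3*pb - a^2*b*pb) / ((a^2+b^2) * Real.sqrt (a^2+b^2)) := by
  have hpos : 0 < a^2 + b^2 := lt_of_le_of_ne (by positivity) (Ne.symm hU)
  have hfun : (fun t => Mb1 k1 k2 k3 a b t pb)
      = fun x => ((-b^2*k2 + a*pb^2 + a*b*k3) + (-b*pb)*x + (0:ℝ)*x^2) / Real.sqrt (a^2 + b^2) := by
    funext x
    simp only [Mb1, Jang]
    ring
  rw [pdpaR, hfun, deriv_poly2_div_const, div_common _ (a^2+b^2) _ hU]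
  ring

lemma pdMb1pb (k1 k2 k3 a b pa pb : ℝ) (hU : a^2+b^2 ≠ 0) :
    pdpbR (Mb1 k1 k2 k3) a b pa pb = (-b^3*pa + 2*a*b^2*pb - a^2*b*pa + 2*a^3*pb) / ((a^2+b^2) * Real.sqrt (a^2+b^2)) := by
  have hpos : 0 < a^2 + b^2 := lt_of_le_of_ne (by positivity) (Ne.symm hU)
  have hfun : (fun t => Mb1 k1 k2 k3 a b pa t)
      = fun x => ((-b^2*k2 + a*b*k3) + (-b*pa)*x + (a)*x^2) / Real.sqrt (a^2 + b^2) := by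
    funext x
    simp only [Mb1, Jang]
    ring
  rw [pdpbR, hfun, deriv_poly2_div_const, div_common _ (a^2+b^2) _ hU]
  ring

lemma pdMb2a (k1 k2 k3 a b pa pb : ℝ) (hU : a^2+b^2 ≠ 0) :
    pdaR (Mb2 k1 k2 k3) a b pa pb = (b^2*pa*pb - b^3*k2 + 2*a*b*k1 + a*b*pa^2 + 2*a*b^2*k3 + a^3*k3) / ((a^2+b^2) * Real.sqrt (a^2+b^2)) := by
  have hpos : 0 < a^2 + b^2 := lt_of_le_of_ne (by positivity) (Ne.symm hU)
  have hfun : (fun t => Mb2 k1 k2 k3 t b pa pb)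
      = fun x => ((-2*b*k1 - b*pa^2) + (pa*pb - b*k2)*x + (k3)*x^2) / Real.sqrt (x^2 + b^2) := by
    funext x
    simp only [Mb2, Jang]
    ring
  rw [pdaR, hfun, deriv_poly2_div_sqrt _ _ _ _ _ hpos]
  ring

lemma pdMb2b (k1 k2 k3 a b pa pb : ℝ) (hU : a^2+b^2 ≠ 0) :
    pdbR (Mb2 k1 k2 k3) a b pa pb = (-a*b*pa*pb - 2*a^2*k1 - a^2*pa^2 - a^2*b*k3 - a^3*k2) / ((a^2+b^2) * Real.sqrt (a^2+b^2)) := by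
  have hpos : 0 < a^2 + b^2 := lt_of_le_of_ne (by positivity) (Ne.symm hU)
  have hpos' : 0 < b^2 + a^2 := by linarith
  have hfun : (fun t => Mb2 k1 k2 k3 a t pa pb)
      = fun x => ((a*pa*pb + a^2*k3) + (-2*k1 - pa^2 - a*k2)*x + (0:ℝ)*x^2) / Real.sqrt (x^2 + a^2) := by
    funext x
    simp only [Mb2, Jang]
    rw [add_comm (a^2) (x^2)]
    ring
  rw [pdbR, hfun, deriv_poly2_div_sqrt _ _ _ _ _ hpos', add_comm (b^2) (a^2)]
  ring

lemma pdMb2pa (k1 k2 k3 a b pa pb : ℝ) (hU : a^2+b^2 ≠ 0) :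
    pdpaR (Mb2 k1 k2 k3) a b pa pb = (-2*b^3*pa + a*b^2*pb - 2*a^2*b*pa + a^3*pb) / ((a^2+b^2) * Real.sqrt (a^2+b^2)) := by
  have hpos : 0 < a^2 + b^2 := lt_of_le_of_ne (by positivity) (Ne.symm hU)
  have hfun : (fun t => Mb2 k1 k2 k3 a b t pb)
      = fun x => ((-2*b*k1 - a*b*k2 + a^2*k3) + (a*pb)*x + (-b)*x^2) / Real.sqrt (a^2 + b^2) := by
    funext x
    simp only [Mb2, Jang]
    ring
  rw [pdpaR, hfun, deriv_poly2_div_const, div_common _ (a^2+b^2) _ hU]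
  ring

lemma pdMb2pb (k1 k2 k3 a b pa pb : ℝ) (hU : a^2+b^2 ≠ 0) :
    pdpbR (Mb2 k1 k2 k3) a b pa pb = (a*b^2*pa + a^3*pa) / ((a^2+b^2) * Real.sqrt (a^2+b^2)) := by
  have hpos : 0 < a^2 + b^2 := lt_of_le_of_ne (by positivity) (Ne.symm hU)
  have hfun : (fun t => Mb2 k1 k2 k3 a b pa t)
      = fun x => ((-2*b*k1 - b*pa^2 - a*b*k2 + a^2*k3) + (a*pa)*x + (0:ℝ)*x^2) / Real.sqrt (a^2 + b^2) := by
    funext x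
    simp only [Mb2, Jang]
    ring
  rw [pdpbR, hfun, deriv_poly2_div_const, div_common _ (a^2+b^2) _ hU]
  ring

lemma ddMa1 (k1 k2 k3 a b pa pb : ℝ) (hU : a^2+b^2 ≠ 0) : ∀ w : Fin 4 → ℝ,
    ddR (Ma1 k1 k2 k3) a b pa pb w = ((b^2*pa*pb - b^3*k2 + a*b*pa^2 + 2*a*b^2*k3 + a^3*k3) * w 0 + (-a*b*pa*pb - a^2*pa^2 - a^2*b*k3 - a^3*k2) * w 1 + (-2*b^3*pa + a*b^2*pb - 2*a^2*b*pa + a^3*pb) * w 2 + (a*b^2*pa + a^3*pa) * w 3) / ((a^2+b^2) * Real.sqrt (a^2+b^2)) := by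
  intro w
  rw [ddR, pdMa1a k1 k2 k3 a b pa pb hU, pdMa1b k1 k2 k3 a b pa pb hU, pdMa1pa k1 k2 k3 a b pa pb hU, pdMa1pb k1 k2 k3 a b pa pb hU,
    div_mul_eq_mul_div, div_mul_eq_mul_div, div_mul_eq_mul_div, div_mul_eq_mul_div,
    ← add_div, ← add_div, ← add_div]

lemma ddMa2 (k1 k2 k3 a b pa pb : ℝ) (hU : a^2+b^2 ≠ 0) : ∀ w : Fin 4 → ℝ,
    ddR (Ma2 k1 k2 k3) a b pa pb w = ((-2*b^2*k1 - b^2*pb^2 - b^3*k3 - a*b*pa*pb - a*b^2*k2) * w 0 + (b^3*k2 + 2*a*b*k1 + a*b*pb^2 + a^2*pa*pb + 2*a^2*b*k2 - a^3*k3) * w 1 + (b^3*pb + a^2*b*pb) * w 2 + (b^3*pa - 2*a*b^2*pb + a^2*b*pa - 2*a^3*pb) * w 3) / ((a^2+b^2) * Real.sqrt (a^2+b^2)) := by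
  intro w
  rw [ddR, pdMa2a k1 k2 k3 a b pa pb hU, pdMa2b k1 k2 k3 a b pa pb hU, pdMa2pa k1 k2 k3 a b pa pb hU, pdMa2pb k1 k2 k3 a b pa pb hU,
    div_mul_eq_mul_div, div_mul_eq_mul_div, div_mul_eq_mul_div, div_mul_eq_mul_div,
    ← add_div, ← add_div, ← add_div]

lemma ddMb1 (k1 k2 k3 a b pa pb : ℝ) (hU : a^2+b^2 ≠ 0) : ∀ w : Fin 4 → ℝ,
    ddR (Mb1 k1 k2 k3) a b pa pb w = ((b^2*pb^2 + b^3*k3 + a*b*pa*pb + a*b^2*k2) * w 0 + (-b^3*k2 - a*b*pb^2 - a^2*pa*pb - 2*a^2*b*k2 + a^3*k3) * w 1 + (-b^3*pb - a^2*b*pb) * w 2 + (-b^3*pa + 2*a*b^2*pb - a^2*b*pa + 2*a^3*pb) * w 3) / ((a^2+b^2) * Real.sqrt (a^2+b^2)) := by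
  intro w
  rw [ddR, pdMb1a k1 k2 k3 a b pa pb hU, pdMb1b k1 k2 k3 a b pa pb hU, pdMb1pa k1 k2 k3 a b pa pb hU, pdMb1pb k1 k2 k3 a b pa pb hU,
    div_mul_eq_mul_div, div_mul_eq_mul_div, div_mul_eq_mul_div, div_mul_eq_mul_div,
    ← add_div, ← add_div, ← add_div]

lemma ddMb2 (k1 k2 k3 a b pa pb : ℝ) (hU : a^2+b^2 ≠ 0) : ∀ w : Fin 4 → ℝ,
    ddR (Mb2 k1 k2 k3) a b pa pb w = ((b^2*pa*pb - b^3*k2 + 2*a*b*k1 + a*b*pa^2 + 2*a*b^2*k3 + a^3*k3) * w 0 + (-a*b*pa*pb - 2*a^2*k1 - a^2*pa^2 - a^2*b*k3 - a^3*k2) * w 1 + (-2*b^3*pa + a*b^2*pb - 2*a^2*b*pa + a^3*pb) * w 2 + (a*b^2*pa + a^3*pa) * w 3) / ((a^2+b^2) * Real.sqrt (a^2+b^2)) := by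
  intro w
  rw [ddR, pdMb2a k1 k2 k3 a b pa pb hU, pdMb2b k1 k2 k3 a b pa pb hU, pdMb2pa k1 k2 k3 a b pa pb hU, pdMb2pb k1 k2 k3 a b pa pb hU,
    div_mul_eq_mul_div, div_mul_eq_mul_div, div_mul_eq_mul_div, div_mul_eq_mul_div,
    ← add_div, ← add_div, ← add_div]

lemma hK3 (k1 k2 k3 : ℝ) : K3fun k1 k2 k3 = fun a b pa pb => (-2*b^2*pa*pb*k1 - 2*b^3*k1*k2 + 4*a*b*k1^2 + 2*a*b*pb^2*k1 + 2*a*b*pa^2*k1 + 2*a*b^2*k1*k3 - 2*a^2*pa*pb*k1 + 2*a^2*b*k1*k2 - 2*a^3*k1*k3) / (a^2+b^2) := by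
  funext a b pa pb
  simp only [K3fun, Mafun, Mbfun, key_re, Ma1, Ma2, Mb1, Mb2, Jang]
  rw [div_mul_div_comm, div_mul_div_comm, ← add_div, Real.mul_self_sqrt (by positivity)]
  ring

lemma hK4 (k1 k2 k3 : ℝ) : K4fun k1 k2 k3 = fun a b pa pb => (-2*b^2*pa^2*k1 - b^2*pa^2*pb^2 - b^2*pa^4 - 2*b^3*pa*pb*k2 - b^4*k2^2 + 4*a*b*pa*pb*k1 + 2*a*b*pa*pb^3 + 2*a*b*pa^3*pb + 2*a*b^2*pb^2*k2 + 2*a*b^2*pa*pb*k3 - 2*a*b^2*pa^2*k2 + 2*a*b^3*k2*k3 - 2*a^2*pb^2*k1 - a^2*pb^4 - a^2*pa^2*pb^2 - 2*a^2*b*pb^2*k3 + 2*a^2*b*pa*pb*k2 + 2*a^2*b*pa^2*k3 - a^2*b^2*k3^2 - a^2*b^2*k2^2 - 2*a^3*pa*pb*k3 + 2*a^3*b*k2*k3 - a^4*k3^2) / (a^2+b^2) := by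
  funext a b pa pb
  simp only [K4fun, Mafun, Mbfun, key_im, Ma1, Ma2, Mb1, Mb2, Jang]
  rw [div_mul_div_comm, div_mul_div_comm, div_sub_div_same, Real.mul_self_sqrt (by positivity)]
  ring

lemma pdK3a (k1 k2 k3 a b pa pb : ℝ) (hU : a^2+b^2 ≠ 0) :
    pdaR (K3fun k1 k2 k3) a b pa pb = (4*b^3*k1^2 + 2*b^3*pb^2*k1 + 2*b^3*pa^2*k1 + 2*b^4*k1*k3 + 8*a*b^3*k1*k2 - 4*a^2*b*k1^2 - 2*a^2*b*pb^2*k1 - 2*a^2*b*pa^2*k1 - 8*a^2*b^2*k1*k3 - 2*a^4*k1*k3) / (a^2+b^2)^2 := by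
  have hfun : (fun t => K3fun k1 k2 k3 t b pa pb)
      = fun x => ((-2*b^2*pa*pb*k1 - 2*b^3*k1*k2) + (4*b*k1^2 + 2*b*pb^2*k1 + 2*b*pa^2*k1 + 2*b^2*k1*k3)*x + (-2*pa*pb*k1 + 2*b*k1*k2)*x^2 + (-2*k1*k3)*x^3 + (0:ℝ)*x^4) / (x^2 + b^2) := by
    funext t
    simp only [hK3]
    ring
  rw [pdaR, hfun, deriv_poly4_div_quad _ _ _ _ _ _ _ hU]
  ring

lemma pdK3b (k1 k2 k3 a b pa pb : ℝ) (hU : a^2+b^2 ≠ 0) :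
    pdbR (K3fun k1 k2 k3) a b pa pb = (-2*b^4*k1*k2 - 4*a*b^2*k1^2 - 2*a*b^2*pb^2*k1 - 2*a*b^2*pa^2*k1 - 8*a^2*b^2*k1*k2 + 4*a^3*k1^2 + 2*a^3*pb^2*k1 + 2*a^3*pa^2*k1 + 8*a^3*b*k1*k3 + 2*a^4*k1*k2) / (a^2+b^2)^2 := by
  have hfun : (fun t => K3fun k1 k2 k3 a t pa pb)
      = fun x => ((-2*a^2*pa*pb*k1 - 2*a^3*k1*k3) + (4*a*k1^2 + 2*a*pb^2*k1 + 2*a*pa^2*k1 + 2*a^2*k1*k2)*x + (-2*pa*pb*k1 + 2*a*k1*k3)*x^2 + (-2*k1*k2)*x^3 + (0:ℝ)*x^4) / (x^2 + a^2) := by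
    funext t
    simp only [hK3]
    ring
  have hU' : b^2 + a^2 ≠ 0 := by rw [add_comm]; exact hU
  rw [pdbR, hfun, deriv_poly4_div_quad _ _ _ _ _ _ _ hU', add_comm (b^2) (a^2)]
  ring

lemma pdK3pa (k1 k2 k3 a b pa pb : ℝ) (hU : a^2+b^2 ≠ 0) :
    pdpaR (K3fun k1 k2 k3) a b pa pb = (-2*b^2*pb*k1 + 4*a*b*pa*k1 - 2*a^2*pb*k1) / (a^2+b^2) := by
  have hfun : (fun t => K3fun k1 k2 k3 a b t pb)
      = fun x => ((-2*b^3*k1*k2 + 4*a*b*k1^2 + 2*a*b*pb^2*k1 + 2*a*b^2*k1*k3 + 2*a^2*b*k1*k2 - 2*a^3*k1*k3) + (-2*b^2*pb*k1 - 2*a^2*pb*k1)*x + (2*a*b*k1)*x^2 + (0:ℝ)*x^3 + (0:ℝ)*x^4) / (a^2 + b^2) := by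
    funext t
    simp only [hK3]
    ring
  rw [pdpaR, hfun, deriv_poly4_div_const]
  ring

lemma pdK3pb (k1 k2 k3 a b pa pb : ℝ) (hU : a^2+b^2 ≠ 0) :
    pdpbR (K3fun k1 k2 k3) a b pa pb = (-2*b^2*pa*k1 + 4*a*b*pb*k1 - 2*a^2*pa*k1) / (a^2+b^2) := by
  have hfun : (fun t => K3fun k1 k2 k3 a b pa t)
      = fun x => ((-2*b^3*k1*k2 + 4*a*b*k1^2 + 2*a*b*pa^2*k1 + 2*a*b^2*k1*k3 + 2*a^2*b*k1*k2 - 2*a^3*k1*k3) + (-2*b^2*pa*k1 - 2*a^2*pa*k1)*x + (2*a*b*k1)*x^2 + (0:ℝ)*x^3 + (0:ℝ)*x^4) / (a^2 + b^2) := by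
    funext t
    simp only [hK3]
    ring
  rw [pdpbR, hfun, deriv_poly4_div_const]
  ring

lemma pdK4a (k1 k2 k3 a b pa pb : ℝ) (hU : a^2+b^2 ≠ 0) :
    pdaR (K4fun k1 k2 k3) a b pa pb = (4*b^3*pa*pb*k1 + 2*b^3*pa*pb^3 + 2*b^3*pa^3*pb + 2*b^4*pb^2*k2 + 2*b^4*pa*pb*k3 - 2*b^4*pa^2*k2 + 2*b^5*k2*k3 - 4*a*b^2*pb^2*k1 - 2*a*b^2*pb^4 + 4*a*b^2*pa^2*k1 + 2*a*b^2*pa^4 - 4*a*b^3*pb^2*k3 + 8*a*b^3*pa*pb*k2 + 4*a*b^3*pa^2*k3 - 2*a*b^4*k3^2 - 4*a^2*b*pa*pb*k1 - 2*a^2*b*pa*pb^3 - 2*a^2*b*pa^3*pb - 2*a^2*b^2*pb^2*k2 - 8*a^2*b^2*pa*pb*k3 + 2*a^2*b^2*pa^2*k2 + 4*a^2*b^3*k2*k3 - 4*a^3*b^2*k3^2 - 2*a^4*pa*pb*k3 + 2*a^4*b*k2*k3 - 2*a^5*k3^2) / (a^2+b^2)^2 := by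
  have hfun : (fun t => K4fun k1 k2 k3 t b pa pb)
      = fun x => ((-2*b^2*pa^2*k1 - b^2*pa^2*pb^2 - b^2*pa^4 - 2*b^3*pa*pb*k2 - b^4*k2^2) + (4*b*pa*pb*k1 + 2*b*pa*pb^3 + 2*b*pa^3*pb + 2*b^2*pb^2*k2 + 2*b^2*pa*pb*k3 - 2*b^2*pa^2*k2 + 2*b^3*k2*k3)*x + (-2*pb^2*k1 - pb^4 - pa^2*pb^2 - 2*b*pb^2*k3 + 2*b*pa*pb*k2 + 2*b*pa^2*k3 - b^2*k3^2 - b^2*k2^2)*x^2 + (-2*pa*pb*k3 + 2*b*k2*k3)*x^3 + (-k3^2)*x^4) / (x^2 + b^2) := by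
    funext t
    simp only [hK4]
    ring
  rw [pdaR, hfun, deriv_poly4_div_quad _ _ _ _ _ _ _ hU]
  ring

lemma pdK4b (k1 k2 k3 a b pa pb : ℝ) (hU : a^2+b^2 ≠ 0) :
    pdbR (K4fun k1 k2 k3) a b pa pb = (-2*b^4*pa*pb*k2 - 2*b^5*k2^2 - 4*a*b^2*pa*pb*k1 - 2*a*b^2*pa*pb^3 - 2*a*b^2*pa^3*pb + 2*a*b^4*k2*k3 + 4*a^2*b*pb^2*k1 + 2*a^2*b*pb^4 - 4*a^2*b*pa^2*k1 - 2*a^2*b*pa^4 + 2*a^2*b^2*pb^2*k3 - 8*a^2*b^2*pa*pb*k2 - 2*a^2*b^2*pa^2*k3 - 4*a^2*b^3*k2^2 + 4*a^3*pa*pb*k1 + 2*a^3*pa*pb^3 + 2*a^3*pa^3*pb + 4*a^3*b*pb^2*k2 + 8*a^3*b*pa*pb*k3 - 4*a^3*b*pa^2*k2 + 4*a^3*b^2*k2*k3 - 2*a^4*pb^2*k3 + 2*a^4*pa*pb*k2 + 2*a^4*pa^2*k3 - 2*a^4*b*k2^2 + 2*a^5*k2*k3) / (a^2+b^2)^2 :=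 by
  have hfun : (fun t => K4fun k1 k2 k3 a t pa pb)
      = fun x => ((-2*a^2*pb^2*k1 - a^2*pb^4 - a^2*pa^2*pb^2 - 2*a^3*pa*pb*k3 - a^4*k3^2) + (4*a*pa*pb*k1 + 2*a*pa*pb^3 + 2*a*pa^3*pb - 2*a^2*pb^2*k3 + 2*a^2*pa*pb*k2 + 2*a^2*pa^2*k3 + 2*a^3*k2*k3)*x + (-2*pa^2*k1 - pa^2*pb^2 - pa^4 + 2*a*pb^2*k2 + 2*a*pa*pb*k3 - 2*a*pa^2*k2 - a^2*k3^2 - a^2*k2^2)*x^2 + (-2*pa*pb*k2 + 2*a*k2*k3)*x^3 + (-k2^2)*x^4) / (x^2 + a^2) := by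
    funext t
    simp only [hK4]
    ring
  have hU' : b^2 + a^2 ≠ 0 := by rw [add_comm]; exact hU
  rw [pdbR, hfun, deriv_poly4_div_quad _ _ _ _ _ _ _ hU', add_comm (b^2) (a^2)]
  ring

lemma pdK4pa (k1 k2 k3 a b pa pb : ℝ) (hU : a^2+b^2 ≠ 0) :
    pdpaR (K4fun k1 k2 k3) a b pa pb = (-4*b^2*pa*k1 - 2*b^2*pa*pb^2 - 4*b^2*pa^3 - 2*b^3*pb*k2 + 4*a*b*pb*k1 + 2*a*b*pb^3 + 6*a*b*pa^2*pb + 2*a*b^2*pb*k3 - 4*a*b^2*pa*k2 - 2*a^2*pa*pb^2 + 2*a^2*b*pb*k2 + 4*a^2*b*pa*k3 - 2*a^3*pb*k3) / (a^2+b^2) := by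
  have hfun : (fun t => K4fun k1 k2 k3 a b t pb)
      = fun x => ((-b^4*k2^2 + 2*a*b^2*pb^2*k2 + 2*a*b^3*k2*k3 - 2*a^2*pb^2*k1 - a^2*pb^4 - 2*a^2*b*pb^2*k3 - a^2*b^2*k3^2 - a^2*b^2*k2^2 + 2*a^3*b*k2*k3 - a^4*k3^2) + (-2*b^3*pb*k2 + 4*a*b*pb*k1 + 2*a*b*pb^3 + 2*a*b^2*pb*k3 + 2*a^2*b*pb*k2 - 2*a^3*pb*k3)*x + (-2*b^2*k1 - b^2*pb^2 - 2*a*b^2*k2 - a^2*pb^2 + 2*a^2*b*k3)*x^2 + (2*a*b*pb)*x^3 + (-b^2)*x^4) / (a^2 + b^2) := by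
    funext t
    simp only [hK4]
    ring
  rw [pdpaR, hfun, deriv_poly4_div_const]
  ring

lemma pdK4pb (k1 k2 k3 a b pa pb : ℝ) (hU : a^2+b^2 ≠ 0) :
    pdpbR (K4fun k1 k2 k3) a b pa pb = (-2*b^2*pa^2*pb - 2*b^3*pa*k2 + 4*a*b*pa*k1 + 6*a*b*pa*pb^2 + 2*a*b*pa^3 + 4*a*b^2*pb*k2 + 2*a*b^2*pa*k3 - 4*a^2*pb*k1 - 4*a^2*pb^3 - 2*a^2*pa^2*pb - 4*a^2*b*pb*k3 + 2*a^2*b*pa*k2 - 2*a^3*pa*k3) / (a^2+b^2) := by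
  have hfun : (fun t => K4fun k1 k2 k3 a b pa t)
      = fun x => ((-2*b^2*pa^2*k1 - b^2*pa^4 - b^4*k2^2 - 2*a*b^2*pa^2*k2 + 2*a*b^3*k2*k3 + 2*a^2*b*pa^2*k3 - a^2*b^2*k3^2 - a^2*b^2*k2^2 + 2*a^3*b*k2*k3 - a^4*k3^2) + (-2*b^3*pa*k2 + 4*a*b*pa*k1 + 2*a*b*pa^3 + 2*a*b^2*pa*k3 + 2*a^2*b*pa*k2 - 2*a^3*pa*k3)*x + (-b^2*pa^2 + 2*a*b^2*k2 - 2*a^2*k1 - a^2*pa^2 - 2*a^2*b*k3)*x^2 + (2*a*b*pa)*x^3 + (-a^2)*x^4) / (a^2 + b^2) := by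
    funext t
    simp only [hK4]
    ring
  rw [pdpbR, hfun, deriv_poly4_div_const]
  ring

lemma hHRfun (k1 k2 k3 : ℝ) : HR k1 k2 k3 = fun a b pa pb => (2*k1 + pb^2 + pa^2 + 2*b*k3 + 2*a*k2) / (2*(a^2+b^2)) := by
  funext a b pa pb
  simp only [HR]
  rcases eq_or_ne (a^2+b^2) 0 with h | h
  · rw [show a^2+b^2 = 0 from h]
    norm_num
  · field_simp
    ring

lemma hG0 (k1 k2 k3 a b pa pb : ℝ) (hU : a^2+b^2 ≠ 0) :
    GammaVF k1 k2 k3 a b pa pb 0 = pa/(a^2+b^2) := by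
  have hfun : (fun t => HR k1 k2 k3 a b t pb)
      = fun x => ((2*k1 + pb^2 + 2*b*k3 + 2*a*k2) + (0:ℝ)*x + (1)*x^2) / (2*(a^2 + b^2)) := by
    funext t
    simp only [hHRfun]
    ring
  simp only [GammaVF, hamVF, Matrix.cons_val_zero, Matrix.cons_val_one, Matrix.head_cons,
    Matrix.cons_val_two, Matrix.tail_cons, Matrix.cons_val_three]
  rw [pdpaR, hfun, deriv_poly2_div_const]
  field_simp
  ring

lemma hG1 (k1 k2 k3 a b pa pb : ℝ) (hU : a^2+b^2 ≠ 0) :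
    GammaVF k1 k2 k3 a b pa pb 1 = pb/(a^2+b^2) := by
  have hfun : (fun t => HR k1 k2 k3 a b pa t)
      = fun x => ((2*k1 + pa^2 + 2*b*k3 + 2*a*k2) + (0:ℝ)*x + (1)*x^2) / (2*(a^2 + b^2)) := by
    funext t
    simp only [hHRfun]
    ring
  simp only [GammaVF, hamVF, Matrix.cons_val_zero, Matrix.cons_val_one, Matrix.head_cons,
    Matrix.cons_val_two, Matrix.tail_cons, Matrix.cons_val_three]
  rw [pdpbR, hfun, deriv_poly2_div_const]
  field_simp
  ring

lemma hG2 (k1 k2 k3 a b pa pb : ℝ) (hU : a^2+b^2 ≠ 0) :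
    GammaVF k1 k2 k3 a b pa pb 2 = (-b^2*k2 + 2*a*k1 + a*pb^2 + a*pa^2 + 2*a*b*k3 + a^2*k2)/(a^2+b^2)^2 := by
  have hfun : (fun t => HR k1 k2 k3 t b pa pb)
      = fun x => ((2*k1 + pb^2 + pa^2 + 2*b*k3) + (2*k2)*x + (0:ℝ)*x^2) / (2*(x^2 + b^2)) := by
    funext t
    simp only [hHRfun]
    ring
  simp only [GammaVF, hamVF, Matrix.cons_val_zero, Matrix.cons_val_one, Matrix.head_cons,
    Matrix.cons_val_two, Matrix.tail_cons, Matrix.cons_val_three]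
  rw [pdaR, hfun, deriv_poly2_div_2quad _ _ _ _ _ hU]
  field_simp
  ring

lemma hG3 (k1 k2 k3 a b pa pb : ℝ) (hU : a^2+b^2 ≠ 0) :
    GammaVF k1 k2 k3 a b pa pb 3 = (2*b*k1 + b*pb^2 + b*pa^2 + b^2*k3 + 2*a*b*k2 - a^2*k3)/(a^2+b^2)^2 := by
  have hfun : (fun t => HR k1 k2 k3 a t pa pb)
      = fun x => ((2*k1 + pb^2 + pa^2 + 2*a*k2) + (2*k3)*x + (0:ℝ)*x^2) / (2*(x^2 + a^2)) := by
    funext t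
    simp only [hHRfun]
    ring
  simp only [GammaVF, hamVF, Matrix.cons_val_zero, Matrix.cons_val_one, Matrix.head_cons,
    Matrix.cons_val_two, Matrix.tail_cons, Matrix.cons_val_three]
  have hU' : b^2 + a^2 ≠ 0 := by rw [add_comm]; exact hU
  rw [pdbR, hfun, deriv_poly2_div_2quad _ _ _ _ _ hU', add_comm (b^2) (a^2)]
  field_simp
  ring

lemma ddGMa1 (k1 k2 k3 a b pa pb : ℝ) (hU : a^2+b^2 ≠ 0) :
    ddR (Ma1 k1 k2 k3) a b pa pb (GammaVF k1 k2 k3 a b pa pb) = (b^2*pa^2*pb + b^3*pa*k2 - 2*a*b*pa*k1 - 2*a*b*pa*pb^2 - a*b^2*pb*k2 - a*b^2*pa*k3 + 2*a^2*pb*k1 + a^2*pb^3 + a^2*b*pb*k3) / ((a^2+b^2)^2 * Real.sqrt (a^2+b^2)) := by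
  have hpos : 0 < a^2 + b^2 := lt_of_le_of_ne (by positivity) (Ne.symm hU)
  have hs : Real.sqrt (a^2+b^2) ≠ 0 := by positivity
  rw [ddMa1 k1 k2 k3 a b pa pb hU (GammaVF k1 k2 k3 a b pa pb),
    hG0 k1 k2 k3 a b pa pb hU, hG1 k1 k2 k3 a b pa pb hU, hG2 k1 k2 k3 a b pa pb hU, hG3 k1 k2 k3 a b pa pb hU]
  field_simp
  ring

lemma ddGMa2 (k1 k2 k3 a b pa pb : ℝ) (hU : a^2+b^2 ≠ 0) :
    ddR (Ma2 k1 k2 k3) a b pa pb (GammaVF k1 k2 k3 a b pa pb) = (b^2*pa^3 - 2*a*b*pa^2*pb + a*b^2*pa*k2 + a^2*pa*pb^2 - a^2*b*pb*k2 - a^2*b*pa*k3 + a^3*pb*k3) / ((a^2+b^2)^2 * Real.sqrt (a^2+b^2)) := by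
  have hpos : 0 < a^2 + b^2 := lt_of_le_of_ne (by positivity) (Ne.symm hU)
  have hs : Real.sqrt (a^2+b^2) ≠ 0 := by positivity
  rw [ddMa2 k1 k2 k3 a b pa pb hU (GammaVF k1 k2 k3 a b pa pb),
    hG0 k1 k2 k3 a b pa pb hU, hG1 k1 k2 k3 a b pa pb hU, hG2 k1 k2 k3 a b pa pb hU, hG3 k1 k2 k3 a b pa pb hU]
  field_simp
  ring

lemma ddGMb1 (k1 k2 k3 a b pa pb : ℝ) (hU : a^2+b^2 ≠ 0) :
    ddR (Mb1 k1 k2 k3) a b pa pb (GammaVF k1 k2 k3 a b pa pb) = (-2*b^2*pa*k1 - b^2*pa^3 + 2*a*b*pb*k1 + 2*a*b*pa^2*pb - a*b^2*pa*k2 - a^2*pa*pb^2 + a^2*b*pb*k2 + a^2*b*pa*k3 - a^3*pb*k3) / ((a^2+b^2)^2 * Real.sqrt (a^2+b^2)) := by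
  have hpos : 0 < a^2 + b^2 := lt_of_le_of_ne (by positivity) (Ne.symm hU)
  have hs : Real.sqrt (a^2+b^2) ≠ 0 := by positivity
  rw [ddMb1 k1 k2 k3 a b pa pb hU (GammaVF k1 k2 k3 a b pa pb),
    hG0 k1 k2 k3 a b pa pb hU, hG1 k1 k2 k3 a b pa pb hU, hG2 k1 k2 k3 a b pa pb hU, hG3 k1 k2 k3 a b pa pb hU]
  field_simp
  ring

lemma ddGMb2 (k1 k2 k3 a b pa pb : ℝ) (hU : a^2+b^2 ≠ 0) :
    ddR (Mb2 k1 k2 k3) a b pa pb (GammaVF k1 k2 k3 a b pa pb) = (b^2*pa^2*pb + b^3*pa*k2 - 2*a*b*pa*pb^2 - a*b^2*pb*k2 - a*b^2*pa*k3 + a^2*pb^3 + a^2*b*pb*k3) / ((a^2+b^2)^2 * Real.sqrt (a^2+b^2)) := by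
  have hpos : 0 < a^2 + b^2 := lt_of_le_of_ne (by positivity) (Ne.symm hU)
  have hs : Real.sqrt (a^2+b^2) ≠ 0 := by positivity
  rw [ddMb2 k1 k2 k3 a b pa pb hU (GammaVF k1 k2 k3 a b pa pb),
    hG0 k1 k2 k3 a b pa pb hU, hG1 k1 k2 k3 a b pa pb hU, hG2 k1 k2 k3 a b pa pb hU, hG3 k1 k2 k3 a b pa pb hU]
  field_simp
  ring

lemma wG11 (k1 k2 k3 a b pa pb : ℝ) (hU : a^2+b^2 ≠ 0) : ∀ v : Fin 4 → ℝ,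
    wedgeR (Ma1 k1 k2 k3) (Mb1 k1 k2 k3) a b pa pb (GammaVF k1 k2 k3 a b pa pb) v
      = ((b^2*pa^2*pb + b^3*pa*k2 - 2*a*b*pa*k1 - 2*a*b*pa*pb^2 - a*b^2*pb*k2 - a*b^2*pa*k3 + 2*a^2*pb*k1 + a^2*pb^3 + a^2*b*pb*k3) * ((b^2*pb^2 + b^3*k3 + a*b*pa*pb + a*b^2*k2) * v 0 + (-b^3*k2 - a*b*pb^2 - a^2*pa*pb - 2*a^2*b*k2 + a^3*k3) * v 1 + (-b^3*pb - a^2*b*pb) * v 2 + (-b^3*pa + 2*a*b^2*pb - a^2*b*pa + 2*a^3*pb) * v 3) - ((b^2*pa*pb - b^3*k2 + a*b*pa^2 + 2*a*b^2*k3 + a^3*k3) * v 0 + (-a*b*pa*pb - a^2*pa^2 - a^2*b*k3 - a^3*k2) * v 1 + (-2*b^3*pa + a*b^2*pb - 2*a^2*b*pa + a^3*pb) * v 2 + (a*b^2*pa + a^3*pa) * v 3) * (-2*b^2*pa*k1 - b^2*pa^3 + 2*a*b*pb*k1 + 2*a*b*pa^2*pb - a*b^2*pa*k2 - a^2*pa*pb^2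 + a^2*b*pb*k2 + a^2*b*pa*k3 - a^3*pb*k3)) / (a^2+b^2)^4 := by
  intro v
  have hss : Real.sqrt (a^2+b^2) * Real.sqrt (a^2+b^2) = a^2+b^2 := Real.mul_self_sqrt (by positivity)
  have hD1 : ((a^2+b^2)^2 * Real.sqrt (a^2+b^2)) * ((a^2+b^2) * Real.sqrt (a^2+b^2)) = (a^2+b^2)^4 := by
    rw [mul_mul_mul_comm, hss]; ring
  have hD2 : ((a^2+b^2) * Real.sqrt (a^2+b^2)) * ((a^2+b^2)^2 * Real.sqrt (a^2+b^2)) = (a^2+b^2)^4 := by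
    rw [mul_mul_mul_comm, hss]; ring
  rw [wedgeR, ddGMa1 k1 k2 k3 a b pa pb hU, ddGMb1 k1 k2 k3 a b pa pb hU, ddMa1 k1 k2 k3 a b pa pb hU v, ddMb1 k1 k2 k3 a b pa pb hU v,
    div_mul_div_comm, div_mul_div_comm, hD1, hD2, div_sub_div_same]

lemma wG22 (k1 k2 k3 a b pa pb : ℝ) (hU : a^2+b^2 ≠ 0) : ∀ v : Fin 4 → ℝ,
    wedgeR (Ma2 k1 k2 k3) (Mb2 k1 k2 k3) a b pa pb (GammaVF k1 k2 k3 a b pa pb) v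
      = ((b^2*pa^3 - 2*a*b*pa^2*pb + a*b^2*pa*k2 + a^2*pa*pb^2 - a^2*b*pb*k2 - a^2*b*pa*k3 + a^3*pb*k3) * ((b^2*pa*pb - b^3*k2 + 2*a*b*k1 + a*b*pa^2 + 2*a*b^2*k3 + a^3*k3) * v 0 + (-a*b*pa*pb - 2*a^2*k1 - a^2*pa^2 - a^2*b*k3 - a^3*k2) * v 1 + (-2*b^3*pa + a*b^2*pb - 2*a^2*b*pa + a^3*pb) * v 2 + (a*b^2*pa + a^3*pa) * v 3) - ((-2*b^2*k1 - b^2*pb^2 - b^3*k3 - a*b*pa*pb - a*b^2*k2) * v 0 + (b^3*k2 + 2*a*b*k1 + a*b*pb^2 + a^2*pa*pb + 2*a^2*b*k2 - a^3*k3) * v 1 + (b^3*pb + a^2*b*pb) * v 2 + (b^3*pa - 2*a*b^2*pb + a^2*b*pa - 2*a^3*pb) * v 3) * (b^2*pa^2*pb + b^3*pa*k2 - 2*a*b*pa*pb^2 - a*b^2*pb*k2 - a*b^2*pa*k3 + a^2*pb^3 + a^2*b*pb*k3)) / (a^2+b^2)^4 := by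
  intro v
  have hss : Real.sqrt (a^2+b^2) * Real.sqrt (a^2+b^2) = a^2+b^2 := Real.mul_self_sqrt (by positivity)
  have hD1 : ((a^2+b^2)^2 * Real.sqrt (a^2+b^2)) * ((a^2+b^2) * Real.sqrt (a^2+b^2)) = (a^2+b^2)^4 := by
    rw [mul_mul_mul_comm, hss]; ring
  have hD2 : ((a^2+b^2) * Real.sqrt (a^2+b^2)) * ((a^2+b^2)^2 * Real.sqrt (a^2+b^2)) = (a^2+b^2)^4 := by
    rw [mul_mul_mul_comm, hss]; ring
  rw [wedgeR, ddGMa2 k1 k2 k3 a b pa pb hU, ddGMb2 k1 k2 k3 a b pa pb hU, ddMa2 k1 k2 k3 a b pa pb hU v, ddMb2 k1 k2 k3 a b pa pb hU v,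
    div_mul_div_comm, div_mul_div_comm, hD1, hD2, div_sub_div_same]

lemma wG12 (k1 k2 k3 a b pa pb : ℝ) (hU : a^2+b^2 ≠ 0) : ∀ v : Fin 4 → ℝ,
    wedgeR (Ma1 k1 k2 k3) (Mb2 k1 k2 k3) a b pa pb (GammaVF k1 k2 k3 a b pa pb) v
      = ((b^2*pa^2*pb + b^3*pa*k2 - 2*a*b*pa*k1 - 2*a*b*pa*pb^2 - a*b^2*pb*k2 - a*b^2*pa*k3 + 2*a^2*pb*k1 + a^2*pb^3 + a^2*b*pb*k3) * ((b^2*pa*pb - b^3*k2 + 2*a*b*k1 + a*b*pa^2 + 2*a*b^2*k3 + a^3*k3) * v 0 + (-a*b*pa*pb - 2*a^2*k1 - a^2*pa^2 - a^2*b*k3 - a^3*k2) * v 1 + (-2*b^3*pa + a*b^2*pb - 2*a^2*b*pa + a^3*pb) * v 2 + (a*b^2*pa + a^3*pa) * v 3) - ((b^2*pa*pb - b^3*k2 + a*b*pa^2 + 2*a*b^2*k3 + a^3*k3) * v 0 + (-a*b*pa*pb - a^2*pa^2 - a^2*b*k3 - a^3*k2) * v 1 + (-2*b^3*pa + a*b^2*pb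 - 2*a^2*b*pa + a^3*pb) * v 2 + (a*b^2*pa + a^3*pa) * v 3) * (b^2*pa^2*pb + b^3*pa*k2 - 2*a*b*pa*pb^2 - a*b^2*pb*k2 - a*b^2*pa*k3 + a^2*pb^3 + a^2*b*pb*k3)) / (a^2+b^2)^4 := by
  intro v
  have hss : Real.sqrt (a^2+b^2) * Real.sqrt (a^2+b^2) = a^2+b^2 := Real.mul_self_sqrt (by positivity)
  have hD1 : ((a^2+b^2)^2 * Real.sqrt (a^2+b^2)) * ((a^2+b^2) * Real.sqrt (a^2+b^2)) = (a^2+b^2)^4 := by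
    rw [mul_mul_mul_comm, hss]; ring
  have hD2 : ((a^2+b^2) * Real.sqrt (a^2+b^2)) * ((a^2+b^2)^2 * Real.sqrt (a^2+b^2)) = (a^2+b^2)^4 := by
    rw [mul_mul_mul_comm, hss]; ring
  rw [wedgeR, ddGMa1 k1 k2 k3 a b pa pb hU, ddGMb2 k1 k2 k3 a b pa pb hU, ddMa1 k1 k2 k3 a b pa pb hU v, ddMb2 k1 k2 k3 a b pa pb hU v,
    div_mul_div_comm, div_mul_div_comm, hD1, hD2, div_sub_div_same]

lemma wG21 (k1 k2 k3 a b pa pb : ℝ) (hU : a^2+b^2 ≠ 0) : ∀ v : Fin 4 → ℝ,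
    wedgeR (Ma2 k1 k2 k3) (Mb1 k1 k2 k3) a b pa pb (GammaVF k1 k2 k3 a b pa pb) v
      = ((b^2*pa^3 - 2*a*b*pa^2*pb + a*b^2*pa*k2 + a^2*pa*pb^2 - a^2*b*pb*k2 - a^2*b*pa*k3 + a^3*pb*k3) * ((b^2*pb^2 + b^3*k3 + a*b*pa*pb + a*b^2*k2) * v 0 + (-b^3*k2 - a*b*pb^2 - a^2*pa*pb - 2*a^2*b*k2 + a^3*k3) * v 1 + (-b^3*pb - a^2*b*pb) * v 2 + (-b^3*pa + 2*a*b^2*pb - a^2*b*pa + 2*a^3*pb) * v 3) - ((-2*b^2*k1 - b^2*pb^2 - b^3*k3 - a*b*pa*pb - a*b^2*k2) * v 0 + (b^3*k2 + 2*a*b*k1 + a*b*pb^2 + a^2*pa*pb + 2*a^2*b*k2 - a^3*k3) * v 1 + (b^3*pb + a^2*b*pb) * v 2 + (b^3*pa - 2*a*b^2*pb + a^2*b*pa - 2*a^3*pb) * v 3) * (-2*b^2*pa*k1 - b^2*pa^3 + 2*a*b*pb*k1 + 2*a*b*pa^2*pb - a*b^2*pa*k2 - a^2*pa*pb^2 +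 a^2*b*pb*k2 + a^2*b*pa*k3 - a^3*pb*k3)) / (a^2+b^2)^4 := by
  intro v
  have hss : Real.sqrt (a^2+b^2) * Real.sqrt (a^2+b^2) = a^2+b^2 := Real.mul_self_sqrt (by positivity)
  have hD1 : ((a^2+b^2)^2 * Real.sqrt (a^2+b^2)) * ((a^2+b^2) * Real.sqrt (a^2+b^2)) = (a^2+b^2)^4 := by
    rw [mul_mul_mul_comm, hss]; ring
  have hD2 : ((a^2+b^2) * Real.sqrt (a^2+b^2)) * ((a^2+b^2)^2 * Real.sqrt (a^2+b^2)) = (a^2+b^2)^4 := by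
    rw [mul_mul_mul_comm, hss]; ring
  rw [wedgeR, ddGMa2 k1 k2 k3 a b pa pb hU, ddGMb1 k1 k2 k3 a b pa pb hU, ddMa2 k1 k2 k3 a b pa pb hU v, ddMb1 k1 k2 k3 a b pa pb hU v,
    div_mul_div_comm, div_mul_div_comm, hD1, hD2, div_sub_div_same]

lemma OmG1 (k1 k2 k3 a b pa pb : ℝ) (hU : a^2+b^2 ≠ 0) : ∀ v : Fin 4 → ℝ,
    OmM1 k1 k2 k3 a b pa pb (GammaVF k1 k2 k3 a b pa pb) v = ((4*b^4*pa^2*pb*k1 + 2*b^4*pa^2*pb^3 + 2*b^4*pa^4*pb + 2*b^5*pa*pb^2*k2 + 2*b^5*pa^2*pb*k3 - 2*b^5*pa^3*k2 + 2*b^6*pa*k2*k3 - 8*a*b^3*pa*pb^2*k1 - 4*a*b^3*pa*pb^4 + 4*a*b^3*pa^3*k1 - 2*a*b^3*pa^3*pb^2 + 2*a*b^3*pa^5 - 2*a*b^4*pb^3*k2 - 6*a*b^4*pa*pb^2*k3 + 10*a*b^4*pa^2*pb*k2 + 4*a*b^4*pa^3*k3 - 2*a*b^5*pb*k2*k3 -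 2*a*b^5*pa*k3^2 + 4*a^2*b^2*pb^3*k1 + 2*a^2*b^2*pb^5 - 8*a^2*b^2*pa^2*pb*k1 - 2*a^2*b^2*pa^2*pb^3 - 4*a^2*b^2*pa^4*pb + 4*a^2*b^3*pb^3*k3 - 10*a^2*b^3*pa*pb^2*k2 - 12*a^2*b^3*pa^2*pb*k3 + 2*a^2*b^3*pa^3*k2 + 2*a^2*b^4*pb*k3^2 + 4*a^2*b^4*pa*k2*k3 + 4*a^3*b*pa*pb^2*k1 + 2*a^3*b*pa*pb^4 + 2*a^3*b*pa^3*pb^2 + 2*a^3*b^2*pb^3*k2 + 8*a^3*b^2*pa*pb^2*k3 - 2*a^3*b^2*pa^2*pb*k2 - 4*a^3*b^3*pb*k2*k3 - 4*a^3*b^3*pa*k3^2 - 2*a^4*b*pa^2*pb*k3 + 4*a^4*b^2*pb*k3^2 + 2*a^4*b^2*pa*k2*k3 + 2*a^5*pa*pb^2*k3 - 2*a^5*b*pb*k2*k3 - 2*a^5*b*pa*k3^2 + 2*a^6*pb*k3^2) * v 0 + (-2*b^5*pa^2*pb*k2 - 2*b^6*pa*k2^2 - 4*a*b^3*pa^2*pb*k1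 - 2*a*b^3*pa^2*pb^3 - 2*a*b^3*pa^4*pb + 2*a*b^4*pa*pb^2*k2 + 2*a*b^5*pb*k2^2 + 2*a*b^5*pa*k2*k3 + 8*a^2*b^2*pa*pb^2*k1 + 4*a^2*b^2*pa*pb^4 - 4*a^2*b^2*pa^3*k1 + 2*a^2*b^2*pa^3*pb^2 - 2*a^2*b^2*pa^5 + 2*a^2*b^3*pa*pb^2*k3 - 8*a^2*b^3*pa^2*pb*k2 - 2*a^2*b^3*pa^3*k3 - 2*a^2*b^4*pb*k2*k3 - 4*a^2*b^4*pa*k2^2 - 4*a^3*b*pb^3*k1 - 2*a^3*b*pb^5 + 8*a^3*b*pa^2*pb*k1 + 2*a^3*b*pa^2*pb^3 + 4*a^3*b*pa^4*pb - 2*a^3*b^2*pb^3*k3 + 12*a^3*b^2*pa*pb^2*k2 + 10*a^3*b^2*pa^2*pb*k3 - 4*a^3*b^2*pa^3*k2 + 4*a^3*b^3*pb*k2^2 + 4*a^3*b^3*pa*k2*k3 - 4*a^4*pa*pb^2*k1 - 2*a^4*pa*pb^4 - 2*a^4*pa^3*pb^2 - 4*a^4*b*pb^3*k2 - 10*a^4*b*pa*pb^2*k3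 + 6*a^4*b*pa^2*pb*k2 + 2*a^4*b*pa^3*k3 - 4*a^4*b^2*pb*k2*k3 - 2*a^4*b^2*pa*k2^2 + 2*a^5*pb^3*k3 - 2*a^5*pa*pb^2*k2 - 2*a^5*pa^2*pb*k3 + 2*a^5*b*pb*k2^2 + 2*a^5*b*pa*k2*k3 - 2*a^6*pb*k2*k3) * v 1 + (-4*b^5*pa^2*k1 - 2*b^5*pa^2*pb^2 - 4*b^5*pa^4 - 2*b^6*pa*pb*k2 + 8*a*b^4*pa*pb*k1 + 4*a*b^4*pa*pb^3 + 10*a*b^4*pa^3*pb + 2*a*b^5*pb^2*k2 + 2*a*b^5*pa*pb*k3 - 4*a*b^5*pa^2*k2 - 4*a^2*b^3*pb^2*k1 - 2*a^2*b^3*pb^4 - 4*a^2*b^3*pa^2*k1 - 10*a^2*b^3*pa^2*pb^2 - 4*a^2*b^3*pa^4 - 2*a^2*b^4*pb^2*k3 + 4*a^2*b^4*pa*pb*k2 + 4*a^2*b^4*pa^2*k3 + 8*a^3*b^2*pa*pb*k1 + 6*a^3*b^2*pa*pb^3 + 10*a^3*b^2*pa^3*pb - 4*a^3*b^3*pa*pb*k3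 - 4*a^3*b^3*pa^2*k2 - 4*a^4*b*pb^2*k1 - 2*a^4*b*pb^4 - 8*a^4*b*pa^2*pb^2 + 6*a^4*b^2*pa*pb*k2 + 4*a^4*b^2*pa^2*k3 + 2*a^5*pa*pb^3 - 2*a^5*b*pb^2*k2 - 6*a^5*b*pa*pb*k3 + 2*a^6*pb^2*k3) * v 2 + (-2*b^5*pa^3*pb - 2*b^6*pa^2*k2 + 4*a*b^4*pa^2*k1 + 8*a*b^4*pa^2*pb^2 + 2*a*b^4*pa^4 + 6*a*b^5*pa*pb*k2 + 2*a*b^5*pa^2*k3 - 8*a^2*b^3*pa*pb*k1 - 10*a^2*b^3*pa*pb^3 - 6*a^2*b^3*pa^3*pb - 4*a^2*b^4*pb^2*k2 - 6*a^2*b^4*pa*pb*k3 + 4*a^3*b^2*pb^2*k1 + 4*a^3*b^2*pb^4 + 4*a^3*b^2*pa^2*k1 + 10*a^3*b^2*pa^2*pb^2 + 2*a^3*b^2*pa^4 + 4*a^3*b^3*pb^2*k3 + 4*a^3*b^3*pa*pb*k2 - 8*a^4*b*pa*pb*k1 - 10*a^4*b*pa*pb^3 - 4*a^4*b*pa^3*pb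 - 4*a^4*b^2*pb^2*k2 - 4*a^4*b^2*pa*pb*k3 + 2*a^4*b^2*pa^2*k2 + 4*a^5*pb^2*k1 + 4*a^5*pb^4 + 2*a^5*pa^2*pb^2 + 4*a^5*b*pb^2*k3 - 2*a^5*b*pa*pb*k2 - 2*a^5*b*pa^2*k3 + 2*a^6*pa*pb*k3) * v 3) / (a^2+b^2)^4 := by
  intro v
  rw [OmM1, wG11 k1 k2 k3 a b pa pb hU v, wG22 k1 k2 k3 a b pa pb hU v]
  ring

lemma OmG2 (k1 k2 k3 a b pa pb : ℝ) (hU : a^2+b^2 ≠ 0) : ∀ v : Fin 4 → ℝ,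
    OmM2 k1 k2 k3 a b pa pb (GammaVF k1 k2 k3 a b pa pb) v = ((-4*b^4*pa*k1^2 - 2*b^4*pa*pb^2*k1 - 2*b^4*pa^3*k1 - 2*b^5*pa*k1*k3 + 4*a*b^3*pb*k1^2 + 2*a*b^3*pb^3*k1 + 2*a*b^3*pa^2*pb*k1 + 2*a*b^4*pb*k1*k3 - 8*a*b^4*pa*k1*k2 + 4*a^2*b^2*pa*k1^2 + 2*a^2*b^2*pa*pb^2*k1 + 2*a^2*b^2*pa^3*k1 + 8*a^2*b^3*pb*k1*k2 + 8*a^2*b^3*pa*k1*k3 - 4*a^3*b*pb*k1^2 - 2*a^3*b*pb^3*k1 - 2*a^3*b*pa^2*pb*k1 - 8*a^3*b^2*pb*k1*k3 + 2*a^4*b*pa*k1*k3 - 2*a^5*pb*k1*k3) * v 0 + (2*b^5*pa*k1*k2 + 4*a*b^3*pa*k1^2 + 2*a*b^3*pa*pb^2*k1 + 2*a*b^3*pa^3*k1 - 2*a*b^4*pb*k1*k2 - 4*a^2*b^2*pb*k1^2 - 2*a^2*b^2*pb^3*k1 - 2*a^2*b^2*pa^2*pb*k1 + 8*a^2*b^3*pa*k1*k2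 - 4*a^3*b*pa*k1^2 - 2*a^3*b*pa*pb^2*k1 - 2*a^3*b*pa^3*k1 - 8*a^3*b^2*pb*k1*k2 - 8*a^3*b^2*pa*k1*k3 + 4*a^4*pb*k1^2 + 2*a^4*pb^3*k1 + 2*a^4*pa^2*pb*k1 + 8*a^4*b*pb*k1*k3 - 2*a^4*b*pa*k1*k2 + 2*a^5*pb*k1*k2) * v 1 + (2*b^5*pa*pb*k1 - 2*a*b^4*pb^2*k1 - 4*a*b^4*pa^2*k1 + 8*a^2*b^3*pa*pb*k1 - 4*a^3*b^2*pb^2*k1 - 4*a^3*b^2*pa^2*k1 + 6*a^4*b*pa*pb*k1 - 2*a^5*pb^2*k1) * v 2 + (2*b^5*pa^2*k1 - 6*a*b^4*pa*pb*k1 + 4*a^2*b^3*pb^2*k1 + 4*a^2*b^3*pa^2*k1 - 8*a^3*b^2*pa*pb*k1 + 4*a^4*b*pb^2*k1 + 2*a^4*b*pa^2*k1 - 2*a^5*pa*pb*k1) * v 3) / (a^2+b^2)^4 := by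
  intro v
  rw [OmM2, wG12 k1 k2 k3 a b pa pb hU v, wG21 k1 k2 k3 a b pa pb hU v]
  ring

/-- `Γ` is quasi-bi-Hamiltonian with respect to `(ω₀, Ω_{M1})` and
`(ω₀, Ω_{M2})`: `Ω_{M1}(Γ, v) = -λ dK₄[v]` and `Ω_{M2}(Γ, v) = λ dK₃[v]`. -/
theorem stmt18 (k1 k2 k3 : ℝ) (a b pa pb : ℝ) (hU : a ^ 2 + b ^ 2 ≠ 0) (v : Fin 4 → ℝ) :
    OmM1 k1 k2 k3 a b pa pb (GammaVF k1 k2 k3 a b pa pb) v =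
        -(lam a b pa pb) * ddR (K4fun k1 k2 k3) a b pa pb v ∧
      OmM2 k1 k2 k3 a b pa pb (GammaVF k1 k2 k3 a b pa pb) v =
        lam a b pa pb * ddR (K3fun k1 k2 k3) a b pa pb v := by
  constructor
  · rw [OmG1 k1 k2 k3 a b pa pb hU v,
      lam, Jang, ddR, pdK4a k1 k2 k3 a b pa pb hU, pdK4b k1 k2 k3 a b pa pb hU, pdK4pa k1 k2 k3 a b pa pb hU, pdK4pb k1 k2 k3 a b pa pb hU]
    field_simp
    ring
  · rw [OmG2 k1 k2 k3 a b pa pb hU v,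
      lam, Jang, ddR, pdK3a k1 k2 k3 a b pa pb hU, pdK3b k1 k2 k3 a b pa pb hU, pdK3pa k1 k2 k3 a b pa pb hU, pdK3pb k1 k2 k3 a b pa pb hU]
    field_simp
    ring
end
end
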